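/- For any continuous surjective self-map T of a compact metric space X, h̃*(T) = h*(T): the topological tail entropy defined via continuous partitions of unity equals Misiurewicz's topological tail entropy. -/

import Mathlib

open MeasureTheory Filter Set

/-! ### Partitions of unity -/

/-- A finite partition of unity on `X`: a finite family of functions `X → [0,1]`
summing to `1` everywhere. -/
structure PartUnity (X : Type*) where
  n : ℕ
  f : Fin n → X → ℝ
  nonneg : ∀ i x, 0 ≤ f i x
  le_one : ∀ i x, f i x ≤ 1
  sum_one : ∀ x, ∑ i, f i x = 1

namespace PartUnity

variable {X Y : Type*}

/-- A continuous partition of unity. -/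
def Cont [TopologicalSpace X] (Φ : PartUnity X) : Prop := ∀ i, Continuous (Φ.f i)

/-- A measurable partition of unity. -/
def Meas [MeasurableSpace X] (Φ : PartUnity X) : Prop := ∀ i, Measurable (Φ.f i)

/-- A positive partition of unity. -/
def Pos (Φ : PartUnity X) : Prop := ∀ i x, 0 < Φ.f i x

/-- The join `Φ ∨ Ψ = {φ·ψ : φ ∈ Φ, ψ ∈ Ψ}` of two partitions of unity. -/
def join (Φ Ψ : PartUnity X) : PartUnity X where
  n := Φ.n * Ψ.n
  f k x := Φ.f (finProdFinEquiv.symm k).1 x * Ψ.f (finProdFinEquiv.symm k).2 x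
  nonneg k x := mul_nonneg (Φ.nonneg _ x) (Ψ.nonneg _ x)
  le_one k x := mul_le_one₀ (Φ.le_one _ x) (Ψ.nonneg _ x) (Ψ.le_one _ x)
  sum_one x := by
    rw [← Equiv.sum_comp (finProdFinEquiv : Fin Φ.n × Fin Ψ.n ≃ Fin (Φ.n * Ψ.n))
      (fun k => Φ.f (finProdFinEquiv.symm k).1 x * Ψ.f (finProdFinEquiv.symm k).2 x)]
    simp only [Equiv.symm_apply_apply]
    rw [Fintype.sum_prod_type]
    dsimp only
    rw [← Finset.sum_mul_sum, Φ.sum_one x, Ψ.sum_one x, one_mul]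

/-- Pull back a partition of unity by a map: `TΦ = {φ ∘ T : φ ∈ Φ}`. -/
def comp (Φ : PartUnity X) (T : Y → X) : PartUnity Y where
  n := Φ.n
  f i y := Φ.f i (T y)
  nonneg i y := Φ.nonneg i (T y)
  le_one i y := Φ.le_one i (T y)
  sum_one y := Φ.sum_one (T y)

/-- The trivial partition of unity `{1}`. -/
def triv (X : Type*) : PartUnity X where
  n := 1
  f _ _ := 1
  nonneg _ _ := zero_le_one
  le_one _ _ := le_rfl
  sum_one _ := by simp

/-- `dyn T Φ n` is the dynamical join `Φ₀ⁿ⁻¹ = ⋁_{i=0}^{n-1} TⁱΦ`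
(joined with a harmless trivial factor). -/
def dyn (T : X → X) (Φ : PartUnity X) : ℕ → PartUnity X
  | 0 => triv X
  | n + 1 => Φ.join ((dyn T Φ n).comp T)

/-- The product partition of unity `Φ ⊗ Ψ` on `X × Y`. -/
def prod (Φ : PartUnity X) (Ψ : PartUnity Y) : PartUnity (X × Y) where
  n := Φ.n * Ψ.n
  f k p := Φ.f (finProdFinEquiv.symm k).1 p.1 * Ψ.f (finProdFinEquiv.symm k).2 p.2
  nonneg k p := mul_nonneg (Φ.nonneg _ _) (Ψ.nonneg _ _)
  le_one k p := mul_le_one₀ (Φ.le_one _ _) (Ψ.nonneg _ _) (Ψ.le_one _ _)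
  sum_one p := by
    rw [← Equiv.sum_comp (finProdFinEquiv : Fin Φ.n × Fin Ψ.n ≃ Fin (Φ.n * Ψ.n))
      (fun k => Φ.f (finProdFinEquiv.symm k).1 p.1 * Ψ.f (finProdFinEquiv.symm k).2 p.2)]
    simp only [Equiv.symm_apply_apply]
    rw [Fintype.sum_prod_type]
    dsimp only
    rw [← Finset.sum_mul_sum, Φ.sum_one p.1, Ψ.sum_one p.2, one_mul]

/-- The diameter of a partition of unity: the maximum of the diameters of the
supports of its members. -/
noncomputable def diam [PseudoMetricSpace X] (Φ : PartUnity X) : ℝ :=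
  ⨆ i, Metric.diam (tsupport (Φ.f i))

end PartUnity

/-! ### Metric entropy via partitions of unity -/

variable {X Y : Type*}

/-- The static entropy `H̃_μ(Φ) = Σ_φ ( −μ(φ) log μ(φ) + μ(φ log φ) )`. -/
noncomputable def statEnt [MeasurableSpace X] (μ : Measure X) (Φ : PartUnity X) : ℝ :=
  ∑ i, (-((∫ x, Φ.f i x ∂μ) * Real.log (∫ x, Φ.f i x ∂μ)) +
    ∫ x, Φ.f i x * Real.log (Φ.f i x) ∂μ)

/-- The conditional measure `μ_ψ`, determined by `μ_ψ(φ) = μ(φψ)/μ(ψ)`. -/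
noncomputable def condMeas [MeasurableSpace X] (μ : Measure X) (ψ : X → ℝ) : Measure X :=
  (ENNReal.ofReal (∫ x, ψ x ∂μ))⁻¹ • μ.withDensity (fun x => ENNReal.ofReal (ψ x))

/-- The conditional static entropy `H̃_μ(Φ | Ψ) = Σ_ψ μ(ψ) H̃_{μ_ψ}(Φ)`
(terms with `μ(ψ) = 0` vanish since they are multiplied by `μ(ψ) = 0`). -/
noncomputable def condStatEnt [MeasurableSpace X] (μ : Measure X) (Φ Ψ : PartUnity X) : ℝ :=
  ∑ j, (∫ x, Ψ.f j x ∂μ) * statEnt (condMeas μ (Ψ.f j)) Φ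

/-- The local metric entropy `h̃_μ(T,Φ) = lim_n H̃_μ(Φ₀ⁿ⁻¹)/n`. -/
noncomputable def locEnt [MeasurableSpace X] (T : X → X) (μ : Measure X) (Φ : PartUnity X) : ℝ :=
  Filter.atTop.limsup fun n : ℕ => statEnt μ (PartUnity.dyn T Φ n) / (n : ℝ)

/-- The local conditional metric entropy `h̃_μ(T,Φ|Ψ) = lim_n H̃_μ(Φ₀ⁿ⁻¹|Ψ₀ⁿ⁻¹)/n`. -/
noncomputable def condLocEnt [MeasurableSpace X] (T : X → X) (μ : Measure X)
    (Φ Ψ : PartUnity X) : ℝ :=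
  Filter.atTop.limsup fun n : ℕ =>
    condStatEnt μ (PartUnity.dyn T Φ n) (PartUnity.dyn T Ψ n) / (n : ℝ)

/-- The metric entropy `h̃_μ(T)`: supremum of `h̃_μ(T,Φ)` over continuous
partitions of unity. -/
noncomputable def metEnt [TopologicalSpace X] [MeasurableSpace X]
    (T : X → X) (μ : Measure X) : EReal :=
  ⨆ Φ : {Φ : PartUnity X // Φ.Cont}, ((locEnt T μ Φ.1 : ℝ) : EReal)

/-! ### Topological entropy via partitions of unity -/

/-- The topological static entropy `H̃(Φ) = Σ_φ sup φ`. -/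
noncomputable def topStat (Φ : PartUnity X) : ℝ := ∑ i, ⨆ x, Φ.f i x

/-- The local topological entropy `h̃(T,Φ) = lim_n (1/n) log H̃(Φ₀ⁿ⁻¹)`. -/
noncomputable def topLocEnt (T : X → X) (Φ : PartUnity X) : ℝ :=
  Filter.atTop.limsup fun n : ℕ => Real.log (topStat (PartUnity.dyn T Φ n)) / (n : ℝ)

/-- The topological entropy `h̃_top(T)`: supremum of `h̃(T,Φ)` over continuous
partitions of unity. -/
noncomputable def topEnt [TopologicalSpace X] (T : X → X) : EReal :=
  ⨆ Φ : {Φ : PartUnity X // Φ.Cont}, ((topLocEnt T Φ.1 : ℝ) : EReal)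

/-! ### Classical Kolmogorov–Sinai entropy -/

/-- A finite Borel partition of `X` (indexed; atoms may be empty). -/
structure FinBorelPart (X : Type*) [MeasurableSpace X] where
  n : ℕ
  A : Fin n → Set X
  meas : ∀ i, MeasurableSet (A i)
  disj : ∀ i j, i ≠ j → Disjoint (A i) (A j)
  cover : ⋃ i, A i = Set.univ

/-- Local Kolmogorov–Sinai entropy `h_μ(T,𝒜) = lim_n (1/n) Σ_{A ∈ 𝒜₀ⁿ⁻¹} −μ(A) log μ(A)`. -/
noncomputable def ksLocEnt [MeasurableSpace X] (T : X → X) (μ : Measure X)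
    (P : FinBorelPart X) : ℝ :=
  Filter.atTop.limsup fun n : ℕ =>
    (∑ σ : Fin n → Fin P.n,
      Real.negMulLog (μ (⋂ i : Fin n, T^[(i : ℕ)] ⁻¹' P.A (σ i))).toReal) / (n : ℝ)

/-- The Kolmogorov–Sinai metric entropy `h_μ(T)`. -/
noncomputable def ksEnt [MeasurableSpace X] (T : X → X) (μ : Measure X) : EReal :=
  ⨆ P : FinBorelPart X, ((ksLocEnt T μ P : ℝ) : EReal)

/-! ### Classical topological entropy via open covers -/

/-- A finite open cover of `X`. -/
structure FinOpenCover (X : Type*) [TopologicalSpace X] where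
  n : ℕ
  U : Fin n → Set X
  opn : ∀ i, IsOpen (U i)
  cov : ⋃ i, U i = Set.univ

/-- The member `⋂_{i<n} T^{-i} U_{σ(i)}` of the dynamical refinement of a cover. -/
def dynSet (T : X → X) {m : ℕ} (U : Fin m → Set X) (n : ℕ) (σ : Fin n → Fin m) : Set X :=
  ⋂ i : Fin n, T^[(i : ℕ)] ⁻¹' U (σ i)

/-- Minimal cardinality of a subfamily of `V` covering `S`. -/
noncomputable def coverNum {α : Type*} [Fintype α] (V : α → Set X) (S : Set X) : ℕ :=
  sInf {k | ∃ t : Finset α, t.card = k ∧ S ⊆ ⋃ i ∈ t, V i}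

/-- The local classical topological entropy `h(T,𝒰)` of an open cover. -/
noncomputable def covLocEnt [TopologicalSpace X] (T : X → X) (C : FinOpenCover X) : ℝ :=
  Filter.atTop.limsup fun n : ℕ =>
    Real.log ((coverNum (fun σ : Fin n → Fin C.n => dynSet T C.U n σ) Set.univ : ℕ) : ℝ) / (n : ℝ)

/-- The classical topological entropy `h_top(T)` via open covers. -/
noncomputable def topEntCov [TopologicalSpace X] (T : X → X) : EReal :=
  ⨆ C : FinOpenCover X, ((covLocEnt T C : ℝ) : EReal)

/-! ### Misiurewicz topological tail entropy -/

/-- The local conditional topological entropy `h(𝒰|𝒱)` of two open covers. -/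
noncomputable def misCondLoc [TopologicalSpace X] (T : X → X) (CU CV : FinOpenCover X) : ℝ :=
  Filter.atTop.limsup fun n : ℕ =>
    Real.log (((⨆ τ : Fin n → Fin CV.n,
      coverNum (fun σ : Fin n → Fin CU.n => dynSet T CU.U n σ) (dynSet T CV.U n τ) : ℕ)) : ℝ) / (n : ℝ)

/-- The conditional topological entropy `h(T|𝒱) = sup_𝒰 h(𝒰|𝒱)`. -/
noncomputable def misCond [TopologicalSpace X] (T : X → X) (CV : FinOpenCover X) : EReal :=
  ⨆ CU : FinOpenCover X, ((misCondLoc T CU CV : ℝ) : EReal)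

/-- Misiurewicz's topological tail entropy `h*(T) = inf_𝒱 h(T|𝒱)`. -/
noncomputable def misTail [TopologicalSpace X] (T : X → X) : EReal :=
  ⨅ CV : FinOpenCover X, misCond T CV

/-! ### Topological tail entropy via partitions of unity -/

/-- `H̃(Φ|ψ) = Σ_φ sup_{supp ψ} φ`. -/
noncomputable def condTopStatPU [TopologicalSpace X] (Φ : PartUnity X) (ψ : X → ℝ) : ℝ :=
  ∑ i, ⨆ x ∈ tsupport ψ, Φ.f i x

/-- The weight set `D(Ψ) = {a : inf ψ ≤ a_ψ ≤ sup ψ, Σ a_ψ = 1}`. -/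
def weights (Ψ : PartUnity X) : Set (Fin Ψ.n → ℝ) :=
  {a | (∀ j, (⨅ x, Ψ.f j x) ≤ a j ∧ a j ≤ ⨆ x, Ψ.f j x) ∧ ∑ j, a j = 1}

/-- `H̃_n(Φ|Ψ) = sup_{a ∈ D(Ψ₀ⁿ⁻¹)} Σ_ψ a_ψ H̃(Φ₀ⁿ⁻¹|ψ)`. -/
noncomputable def tailStat [TopologicalSpace X] (T : X → X) (Φ Ψ : PartUnity X) (n : ℕ) : ℝ :=
  sSup {r | ∃ a ∈ weights (PartUnity.dyn T Ψ n),
    r = ∑ j, a j * condTopStatPU (PartUnity.dyn T Φ n) ((PartUnity.dyn T Ψ n).f j)}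

/-- The local conditional topological entropy `h̃(Φ|Ψ) = limsup_n (1/n) log H̃_n(Φ|Ψ)`. -/
noncomputable def tailLoc [TopologicalSpace X] (T : X → X) (Φ Ψ : PartUnity X) : ℝ :=
  Filter.atTop.limsup fun n : ℕ => Real.log (tailStat T Φ Ψ n) / (n : ℝ)

/-- The conditional topological entropy `h̃(T|Ψ) = sup_Φ h̃(Φ|Ψ)` over continuous `Φ`. -/
noncomputable def condTopEntPU [TopologicalSpace X] (T : X → X) (Ψ : PartUnity X) : EReal :=
  ⨆ Φ : {Φ : PartUnity X // Φ.Cont}, ((tailLoc T Φ.1 Ψ : ℝ) : EReal)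

/-- The topological tail entropy `h̃*(T) = inf_Ψ h̃(T|Ψ)` over continuous `Ψ`. -/
noncomputable def tailEntPU [TopologicalSpace X] (T : X → X) : EReal :=
  ⨅ Ψ : {Ψ : PartUnity X // Ψ.Cont}, condTopEntPU T Ψ.1

/-! ### Pressures -/

/-- The Birkhoff sum `S_n g = Σ_{i<n} g ∘ Tⁱ`. -/
def birkhoff (T : X → X) (g : X → ℝ) (n : ℕ) (x : X) : ℝ :=
  ∑ i ∈ Finset.range n, g (T^[i] x)

/-- The static pressure `P̃(T,g,Φ,n) = Σ_{φ ∈ Φ₀ⁿ⁻¹} sup (φ e^{S_n g})`. -/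
noncomputable def puPressStat (T : X → X) (g : X → ℝ) (Φ : PartUnity X) (n : ℕ) : ℝ :=
  ∑ i, ⨆ x, (PartUnity.dyn T Φ n).f i x * Real.exp (birkhoff T g n x)

/-- The local topological pressure `P̃_top(T,g,Φ) = lim_n (1/n) log P̃(T,g,Φ,n)`. -/
noncomputable def puLocPress (T : X → X) (g : X → ℝ) (Φ : PartUnity X) : ℝ :=
  Filter.atTop.limsup fun n : ℕ => Real.log (puPressStat T g Φ n) / (n : ℝ)

/-- The topological pressure `P̃_top(T,g)` via continuous partitions of unity. -/
noncomputable def puTopPress [TopologicalSpace X] (T : X → X) (g : X → ℝ) : EReal :=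
  ⨆ Φ : {Φ : PartUnity X // Φ.Cont}, ((puLocPress T g Φ.1 : ℝ) : EReal)

/-- The classical static pressure of an open cover:
`inf { Σ_{V ∈ 𝒱} sup_V e^{S_n g} : 𝒱 a subcover of 𝒰₀ⁿ⁻¹ }`. -/
noncomputable def covPressStat [TopologicalSpace X] (T : X → X) (g : X → ℝ)
    (C : FinOpenCover X) (n : ℕ) : ℝ :=
  sInf {r | ∃ t : Finset (Fin n → Fin C.n),
    (Set.univ ⊆ ⋃ σ ∈ t, dynSet T C.U n σ) ∧
    r = ∑ σ ∈ t, ⨆ x ∈ dynSet T C.U n σ, Real.exp (birkhoff T g n x)}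

/-- The local classical topological pressure of an open cover. -/
noncomputable def covLocPress [TopologicalSpace X] (T : X → X) (g : X → ℝ)
    (C : FinOpenCover X) : ℝ :=
  Filter.atTop.limsup fun n : ℕ => Real.log (covPressStat T g C n) / (n : ℝ)

/-- The classical topological pressure `P_top(T,g)` via open covers. -/
noncomputable def topPress [TopologicalSpace X] (T : X → X) (g : X → ℝ) : EReal :=
  ⨆ C : FinOpenCover X, ((covLocPress T g C : ℝ) : EReal)

/-! ### Topological tail pressure -/

/-- `P̃_n(T,g,Φ|Ψ) = sup_{a ∈ D(Ψ₀ⁿ⁻¹)} Σ_ψ a_ψ Σ_φ sup_{supp ψ} (φ e^{S_n g})`. -/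
noncomputable def tailPressStat [TopologicalSpace X] (T : X → X) (g : X → ℝ)
    (Φ Ψ : PartUnity X) (n : ℕ) : ℝ :=
  sSup {r | ∃ a ∈ weights (PartUnity.dyn T Ψ n),
    r = ∑ j, a j * ∑ i, ⨆ x ∈ tsupport ((PartUnity.dyn T Ψ n).f j),
      (PartUnity.dyn T Φ n).f i x * Real.exp (birkhoff T g n x)}

/-- The local topological tail pressure `P̃(T,g,Φ|Ψ) = limsup_n (1/n) log P̃_n(T,g,Φ|Ψ)`. -/
noncomputable def tailLocPress [TopologicalSpace X] (T : X → X) (g : X → ℝ)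
    (Φ Ψ : PartUnity X) : ℝ :=
  Filter.atTop.limsup fun n : ℕ => Real.log (tailPressStat T g Φ Ψ n) / (n : ℝ)

/-- The conditional topological pressure `P̃(T,g|Ψ) = sup_Φ P̃(T,g,Φ|Ψ)` over continuous `Φ`. -/
noncomputable def condTopPressPU [TopologicalSpace X] (T : X → X) (g : X → ℝ)
    (Ψ : PartUnity X) : EReal :=
  ⨆ Φ : {Φ : PartUnity X // Φ.Cont}, ((tailLocPress T g Φ.1 Ψ : ℝ) : EReal)

/-- The topological tail pressure `P̃*(T,g) = inf_Ψ P̃(T,g|Ψ)` over continuous `Ψ`. -/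
noncomputable def puTailPress [TopologicalSpace X] (T : X → X) (g : X → ℝ) : EReal :=
  ⨅ Ψ : {Ψ : PartUnity X // Ψ.Cont}, condTopPressPU T g Ψ.1

/-! ### Classical topological tail pressure (Li–Chen–Cheng) -/

/-- The Bowen ball `B(x,ε,n) = {y : d(Tⁱx,Tⁱy) < ε for all 0 ≤ i < n}`. -/
def bowenBall [PseudoMetricSpace X] (T : X → X) (x : X) (ε : ℝ) (n : ℕ) : Set X :=
  {y | ∀ i < n, dist (T^[i] x) (T^[i] y) < ε}

/-- `E` is `(n,δ)`-separated: distinct points `y,z ∈ E` satisfy `d(Tⁱy,Tⁱz) > δ`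
for some `0 ≤ i < n`. -/
def IsSep [PseudoMetricSpace X] (T : X → X) (n : ℕ) (δ : ℝ) (E : Finset X) : Prop :=
  ∀ y ∈ E, ∀ z ∈ E, y ≠ z → ∃ i < n, δ < dist (T^[i] y) (T^[i] z)

/-- `P_n(T,g,δ,ε) = sup_x sup { Σ_{y∈E} e^{S_n g(y)} : E (n,δ)-separated ⊆ B(x,ε,n) }`. -/
noncomputable def sepPress [PseudoMetricSpace X] (T : X → X) (g : X → ℝ)
    (n : ℕ) (δ ε : ℝ) : ℝ :=
  ⨆ x : X, sSup {r | ∃ E : Finset X, ↑E ⊆ bowenBall T x ε n ∧ IsSep T n δ E ∧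
    r = ∑ y ∈ E, Real.exp (birkhoff T g n y)}

/-- The classical topological tail pressure
`P*(T,g) = lim_{ε→0} lim_{δ→0} limsup_n (1/n) log P_n(T,g,δ,ε)`
(the inner limits are monotone, hence given by `inf_ε sup_δ`). -/
noncomputable def tailPress [PseudoMetricSpace X] (T : X → X) (g : X → ℝ) : EReal :=
  ⨅ ε : {ε : ℝ // 0 < ε}, ⨆ δ : {δ : ℝ // 0 < δ},
    Filter.atTop.limsup fun n : ℕ => ((Real.log (sepPress T g n δ.1 ε.1) / (n : ℝ) : ℝ) : EReal)

/-! ### Auxiliary lemmas -/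

section Aux

variable {X : Type*}

lemma real_biSup_le {S : Set X} {f : X → ℝ} {C : ℝ} (hC : 0 ≤ C)
    (h : ∀ x ∈ S, f x ≤ C) : (⨆ x ∈ S, f x) ≤ C :=
  Real.iSup_le (fun x => Real.iSup_le (fun hx => h x hx) hC) hC

lemma real_biSup_nonneg {S : Set X} {f : X → ℝ} (h : ∀ x, 0 ≤ f x) :
    0 ≤ ⨆ x ∈ S, f x :=
  Real.iSup_nonneg fun x => Real.iSup_nonneg fun _ => h x

lemma real_le_biSup {S : Set X} {f : X → ℝ} {C : ℝ} (hb : ∀ x, f x ≤ C)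
    {x : X} (hx : x ∈ S) : f x ≤ ⨆ y ∈ S, f y := by
  have h1 : f x ≤ ⨆ _ : x ∈ S, f x :=
    le_ciSup (f := fun _ : x ∈ S => f x) ⟨f x, by rintro _ ⟨i, rfl⟩; exact le_rfl⟩ hx
  refine h1.trans ?_
  refine le_ciSup (f := fun y => ⨆ _ : y ∈ S, f y) ⟨max C 0, ?_⟩ x
  rintro _ ⟨y, rfl⟩
  exact Real.iSup_le (fun hy => (hb y).trans (le_max_left _ _)) (le_max_right _ _)

end Aux

/-! ### The dynamical join: index equivalence and product formula -/

section Dyn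

variable {X : Type*}

noncomputable def dynEquiv (T : X → X) (Φ : PartUnity X) :
    ∀ n : ℕ, (Fin n → Fin Φ.n) ≃ Fin ((PartUnity.dyn T Φ n).n)
  | 0 => Equiv.ofUnique (Fin 0 → Fin Φ.n) (Fin 1)
  | n + 1 =>
    ((Fin.consEquiv (fun _ : Fin (n+1) => Fin Φ.n)).symm.trans
      ((Equiv.refl (Fin Φ.n)).prodCongr (dynEquiv T Φ n))).trans finProdFinEquiv

lemma dyn_f_eq (T : X → X) (Φ : PartUnity X) :
    ∀ (n : ℕ) (σ : Fin n → Fin Φ.n) (x : X),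
    (PartUnity.dyn T Φ n).f (dynEquiv T Φ n σ) x = ∏ k : Fin n, Φ.f (σ k) (T^[(k : ℕ)] x)
  | 0, σ, x => by simp [PartUnity.dyn, PartUnity.triv]
  | n + 1, σ, x => by
    have key : (finProdFinEquiv.symm ((dynEquiv T Φ (n+1)) σ)) =
        (σ 0, dynEquiv T Φ n fun k => σ k.succ) := by
      show finProdFinEquiv.symm (finProdFinEquiv _) = _
      exact (Equiv.symm_apply_apply _ _).trans rfl
    show Φ.f (finProdFinEquiv.symm ((dynEquiv T Φ (n+1)) σ)).1 x *
      (PartUnity.dyn T Φ n).f (finProdFinEquiv.symm ((dynEquiv T Φ (n+1)) σ)).2 (T x) = _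
    rw [key]
    dsimp only
    rw [dyn_f_eq T Φ n _ (T x), Fin.prod_univ_succ]
    exact congrArg₂ _ rfl (Finset.prod_congr rfl fun k _ => by
      rw [Fin.val_succ, Function.iterate_succ_apply])

end Dyn
section PUFacts

open Metric

variable {X : Type*} [MetricSpace X]

omit [MetricSpace X] in
lemma pu_n_pos [Nonempty X] (Φ : PartUnity X) : 0 < Φ.n := by
  rcases Nat.eq_zero_or_pos Φ.n with h | h
  · exfalso
    have hs := Φ.sum_one (Classical.arbitrary X)
    have he : IsEmpty (Fin Φ.n) := by rw [h]; infer_instance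
    rw [Finset.univ_eq_empty] at hs
    simp at hs
  · exact h

omit [MetricSpace X] in
lemma dyn_f_pos_iff (T : X → X) (Φ : PartUnity X) (n : ℕ) (σ : Fin n → Fin Φ.n) (x : X) :
    0 < (PartUnity.dyn T Φ n).f (dynEquiv T Φ n σ) x ↔
      ∀ k : Fin n, 0 < Φ.f (σ k) (T^[(k : ℕ)] x) := by
  rw [dyn_f_eq]
  constructor
  · intro h k
    rcases lt_or_eq_of_le (Φ.nonneg (σ k) (T^[(k : ℕ)] x)) with h' | h'
    · exact h'
    · exfalso
      rw [Finset.prod_eq_zero (Finset.mem_univ k) h'.symm] at h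
      exact lt_irrefl 0 h
  · intro h
    exact Finset.prod_pos fun k _ => h k

lemma tsupport_dyn_subset (T : X → X) (hT : Continuous T) (Φ : PartUnity X) (n : ℕ)
    (σ : Fin n → Fin Φ.n) :
    tsupport ((PartUnity.dyn T Φ n).f (dynEquiv T Φ n σ)) ⊆
      ⋂ k : Fin n, T^[(k : ℕ)] ⁻¹' tsupport (Φ.f (σ k)) := by
  refine closure_minimal ?_ (isClosed_iInter fun k =>
    (isClosed_tsupport _).preimage (hT.iterate _))
  intro x hx
  rw [Function.mem_support, dyn_f_eq] at hx
  rcases Finset.prod_ne_zero_iff.1 hx with h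
  exact Set.mem_iInter.2 fun k => subset_tsupport _ (h k (Finset.mem_univ k))

end PUFacts

section CoverNumFacts

variable {X : Type*} {α : Type*} [Fintype α]

lemma coverNum_le_card {V : α → Set X} {S : Set X} {t : Finset α}
    (h : S ⊆ ⋃ i ∈ t, V i) : coverNum V S ≤ t.card :=
  Nat.sInf_le ⟨t, rfl, h⟩

lemma exists_coverNum {V : α → Set X} {S : Set X} (h : S ⊆ ⋃ i, V i) :
    ∃ t : Finset α, t.card = coverNum V S ∧ S ⊆ ⋃ i ∈ t, V i :=
  Nat.sInf_mem (s := {k | ∃ t : Finset α, t.card = k ∧ S ⊆ ⋃ i ∈ t, V i})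
    ⟨(Finset.univ : Finset α).card, Finset.univ, rfl, by simpa using h⟩

lemma coverNum_mono {V : α → Set X} {S S' : Set X} (hss : S ⊆ S')
    (h : S' ⊆ ⋃ i, V i) : coverNum V S ≤ coverNum V S' := by
  obtain ⟨t, ht, hcov⟩ := exists_coverNum h
  exact ht ▸ coverNum_le_card (hss.trans hcov)

lemma one_le_coverNum {V : α → Set X} {S : Set X} (hS : S.Nonempty)
    (h : S ⊆ ⋃ i, V i) : 1 ≤ coverNum V S := by
  obtain ⟨t, ht, hcov⟩ := exists_coverNum h
  obtain ⟨x, hx⟩ := hS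
  obtain ⟨i, hi, -⟩ := Set.mem_iUnion₂.1 (hcov hx)
  rw [← ht]
  exact Finset.card_pos.2 ⟨i, hi⟩

lemma exists_dynSet_mem {X : Type*} [TopologicalSpace X] (T : X → X) (C : FinOpenCover X) (n : ℕ) (x : X) :
    ∃ σ : Fin n → Fin C.n, x ∈ dynSet T C.U n σ := by
  have h : ∀ k : Fin n, ∃ i, T^[(k : ℕ)] x ∈ C.U i := by
    intro k
    have := C.cov
    have hx : T^[(k : ℕ)] x ∈ ⋃ i, C.U i := this ▸ Set.mem_univ _
    exact Set.mem_iUnion.1 hx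
  choose σ hσ using h
  exact ⟨σ, Set.mem_iInter.2 hσ⟩

lemma dynSet_cover_univ {X : Type*} [TopologicalSpace X] (T : X → X) (C : FinOpenCover X) (n : ℕ) :
    (Set.univ : Set X) ⊆ ⋃ σ : Fin n → Fin C.n, dynSet T C.U n σ := fun x _ => by
  obtain ⟨σ, hσ⟩ := exists_dynSet_mem T C n x
  exact Set.mem_iUnion.2 ⟨σ, hσ⟩

end CoverNumFacts
section SubPU

open Metric

attribute [local instance] Classical.propDecidable

variable {X : Type*} [MetricSpace X]

/-- Auxiliary bump: vanishes `δ`-away-from-deep-inside `V`. -/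
noncomputable def subG (V : Set X) (δ : ℝ) (x : X) : ℝ :=
  if Vᶜ = ∅ then 1 else max 0 (infDist x Vᶜ - δ)

lemma subG_nonneg (V : Set X) (δ : ℝ) (x : X) : 0 ≤ subG V δ x := by
  unfold subG; split
  · exact zero_le_one
  · exact le_max_left _ _

lemma subG_cont (V : Set X) (δ : ℝ) : Continuous (subG V δ) := by
  unfold subG; split
  · exact continuous_const
  · exact continuous_const.max ((continuous_infDist_pt _).sub continuous_const)

lemma subG_pos {V : Set X} {δ : ℝ} (hδ : 0 < δ) {x : X}
    (h : ball x (2 * δ) ⊆ V) : 0 < subG V δ x := by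
  unfold subG; split
  · exact zero_lt_one
  · rename_i hne
    have hVc : Vᶜ.Nonempty := Set.nonempty_iff_ne_empty.2 hne
    have hne' : Nonempty (Vᶜ : Set X) := hVc.to_subtype
    have hd : 2 * δ ≤ infDist x Vᶜ := by
      rw [infDist_eq_iInf]
      refine le_ciInf fun y => ?_
      by_contra hlt
      push_neg at hlt
      exact y.2 (h (mem_ball'.2 hlt))
    have : 0 < infDist x Vᶜ - δ := by linarith
    exact lt_max_of_lt_right this

lemma subG_tsupport {V : Set X} {δ : ℝ} (hδ : 0 < δ) : tsupport (subG V δ) ⊆ V := by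
  by_cases hne : Vᶜ = ∅
  · have : V = Set.univ := by
      rw [← Set.compl_empty_iff]; exact hne
    rw [this]; exact Set.subset_univ _
  · have hVc : Vᶜ.Nonempty := Set.nonempty_iff_ne_empty.2 hne
    have h1 : tsupport (subG V δ) ⊆ {x | δ ≤ infDist x Vᶜ} := by
      refine closure_minimal ?_ (isClosed_le continuous_const (continuous_infDist_pt _))
      intro x hx
      rw [Function.mem_support] at hx
      unfold subG at hx
      rw [if_neg hne] at hx
      have : 0 < infDist x Vᶜ - δ := by
        rcases lt_or_ge 0 (infDist x Vᶜ - δ) with h' | h'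
        · exact h'
        · exact absurd (max_eq_left h') hx
      exact Set.mem_setOf.2 (by linarith)
    intro x hx
    have hd := h1 hx
    by_contra hxV
    have : infDist x Vᶜ = 0 := infDist_zero_of_mem hxV
    rw [Set.mem_setOf] at hd
    linarith

/-- A partition of unity built from bump functions over a family of sets. -/
noncomputable def subPU (V : Fin N → Set X) (δ : ℝ)
    (hpos : ∀ x, 0 < ∑ j, subG (V j) δ x) : PartUnity X where
  n := N
  f i x := subG (V i) δ x / ∑ j, subG (V j) δ x
  nonneg i x := div_nonneg (subG_nonneg _ _ _) (hpos x).le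
  le_one i x := by
    rw [div_le_one (hpos x)]
    exact Finset.single_le_sum (fun j _ => subG_nonneg (V j) δ x) (Finset.mem_univ i)
  sum_one x := by
    rw [← Finset.sum_div]
    exact div_self (hpos x).ne'

lemma subPU_cont {V : Fin N → Set X} {δ : ℝ} (hpos : ∀ x, 0 < ∑ j, subG (V j) δ x) :
    (subPU V δ hpos).Cont := fun i =>
  (subG_cont _ _).div (continuous_finset_sum _ fun j _ => subG_cont _ _)
    fun x => (hpos x).ne'

lemma subPU_tsupport {V : Fin N → Set X} {δ : ℝ} (hδ : 0 < δ)
    (hpos : ∀ x, 0 < ∑ j, subG (V j) δ x) (i : Fin N) :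
    tsupport ((subPU V δ hpos).f i) ⊆ V i := by
  refine (closure_minimal ?_ (isClosed_tsupport (subG (V i) δ))).trans (subG_tsupport hδ)
  intro x hx
  rw [Function.mem_support] at hx
  have : subG (V i) δ x ≠ 0 := fun h0 => hx (by simp [subPU, h0])
  exact subset_tsupport _ this

/-- Existence of a continuous partition of unity subordinate to a finite open cover,
with `δ`-control. -/
lemma exists_subPU [CompactSpace X] (C : FinOpenCover X) :
    ∃ (δ : ℝ), 0 < δ ∧ ∃ hpos : ∀ x : X, 0 < ∑ j, subG (C.U j) δ x, True := by
  obtain ⟨δ', hδ', hLeb⟩ := lebesgue_number_lemma_of_metric isCompact_univ C.opn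
    (by rw [C.cov])
  refine ⟨δ' / 2, by linarith, fun x => ?_, trivial⟩
  obtain ⟨i, hi⟩ := hLeb x (Set.mem_univ x)
  have : 0 < subG (C.U i) (δ' / 2) x := subG_pos (by linarith)
    (by rw [show 2 * (δ' / 2) = δ' by ring]; exact hi)
  exact lt_of_lt_of_le this
    (Finset.single_le_sum (fun j _ => subG_nonneg _ _ _) (Finset.mem_univ i))

/-- Uniform-continuity modulus for all members of a continuous partition of unity. -/
lemma exists_modulus [CompactSpace X] [Nonempty X] (Φ : PartUnity X) (hΦ : Φ.Cont)
    {ε : ℝ} (hε : 0 < ε) :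
    ∃ δ > 0, ∀ (i : Fin Φ.n) (x y : X), dist x y < δ → Φ.f i x ≤ Φ.f i y + ε := by
  have h : ∀ i : Fin Φ.n, ∃ δ > 0, ∀ x y : X, dist x y < δ → |Φ.f i x - Φ.f i y| < ε := by
    intro i
    have := Metric.uniformContinuous_iff.1 (CompactSpace.uniformContinuous_of_continuous (hΦ i)) ε hε
    obtain ⟨δ, hδ, hd⟩ := this
    exact ⟨δ, hδ, fun x y hxy => by
      have := hd (show dist x y < δ from hxy)
      rwa [Real.dist_eq] at this⟩
  choose δf hδf hmod using h
  have hne : Nonempty (Fin Φ.n) := ⟨⟨0, pu_n_pos Φ⟩⟩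
  refine ⟨Finset.univ.inf' (Finset.univ_nonempty) δf, ?_, ?_⟩
  · exact (Finset.lt_inf'_iff _).2 fun i _ => hδf i
  · intro i x y hxy
    have hle : Finset.univ.inf' (Finset.univ_nonempty) δf ≤ δf i :=
      Finset.inf'_le _ (Finset.mem_univ i)
    have := hmod i x y (lt_of_lt_of_le hxy hle)
    have h2 := abs_lt.1 this
    linarith [h2.1, h2.2]

end SubPU
section Sep

open Metric

variable {X : Type*} [MetricSpace X] [CompactSpace X] [Nonempty X]

lemma exists_max_sep (T : X → X) (hT : Continuous T) (n : ℕ) {δ : ℝ} (hδ : 0 < δ)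
    (A : Set X) :
    ∃ E : Finset X, ↑E ⊆ A ∧ IsSep T n δ E ∧
      ∀ x ∈ A, ∃ y ∈ E, ∀ k < n, dist (T^[k] x) (T^[k] y) ≤ δ := by
  -- open "Bowen balls" of radius δ/2
  set B : X → Set X := fun x => ⋂ k ∈ Finset.range n, T^[k] ⁻¹' ball (T^[k] x) (δ/2) with hB
  have hBopen : ∀ x, IsOpen (B x) := fun x =>
    isOpen_biInter_finset fun k _ => (isOpen_ball).preimage (hT.iterate k)
  have hBmem : ∀ x, x ∈ B x := fun x =>
    Set.mem_iInter₂.2 fun k _ => mem_ball_self (by linarith)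
  obtain ⟨t, ht⟩ := isCompact_univ.elim_finite_subcover B hBopen
    (fun x _ => Set.mem_iUnion.2 ⟨x, hBmem x⟩)
  -- cardinality bound for separated sets
  have hbound : ∀ E : Finset X, IsSep T n δ E → E.card ≤ t.card := by
    intro E hsep
    have hc : ∀ y : X, ∃ c ∈ t, y ∈ B c := by
      intro y
      have := ht (Set.mem_univ y)
      simpa using this
    choose c hct hcB using hc
    refine Finset.card_le_card_of_injOn c (fun y _ => hct y) ?_
    intro y hy z hz hyz
    by_contra hne
    obtain ⟨k, hk, hd⟩ := hsep y hy z hz hne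
    have h1 : dist (T^[k] y) (T^[k] (c y)) < δ/2 := by
      have := Set.mem_iInter₂.1 (hcB y) k (Finset.mem_range.2 hk)
      simpa [dist_comm] using this
    have h2 : dist (T^[k] z) (T^[k] (c z)) < δ/2 := by
      have := Set.mem_iInter₂.1 (hcB z) k (Finset.mem_range.2 hk)
      simpa [dist_comm] using this
    rw [hyz] at h1
    have := dist_triangle (T^[k] y) (T^[k] (c z)) (T^[k] z)
    rw [dist_comm (T^[k] (c z)) (T^[k] z)] at this
    linarith
  -- the set of achievable cardinalities
  set K : Set ℕ := {k | ∃ E : Finset X, ↑E ⊆ A ∧ IsSep T n δ E ∧ E.card = k} with hK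
  have hKne : K.Nonempty := ⟨0, ∅, by simp, fun y hy => absurd hy (by simp), rfl⟩
  have hKbdd : BddAbove K := by
    refine ⟨t.card, ?_⟩
    rintro k ⟨E, -, hsep, rfl⟩
    exact hbound E hsep
  obtain ⟨E, hEA, hsep, hcard⟩ := Nat.sSup_mem hKne hKbdd
  classical
  refine ⟨E, hEA, hsep, ?_⟩
  intro x hx
  by_contra hcon
  push_neg at hcon
  -- hcon : ∀ y ∈ E, ∃ k < n, δ < dist (T^[k] x) (T^[k] y)
  have hxE : x ∉ E := by
    intro hxE
    obtain ⟨k, hk, hd⟩ := hcon x hxE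
    simp only [dist_self] at hd
    linarith
  have hsep' : IsSep T n δ (insert x E) := by
    intro y hy z hz hyz
    rcases Finset.mem_insert.1 hy with rfl | hy'
    · rcases Finset.mem_insert.1 hz with h | hz'
      · exact absurd h.symm hyz
      · exact hcon z hz'
    · rcases Finset.mem_insert.1 hz with h | hz'
      · obtain ⟨k, hk, hd⟩ := hcon y hy'
        subst h
        exact ⟨k, hk, by rwa [dist_comm]⟩
      · exact hsep y hy' z hz' hyz
  have hsubA : ↑(insert x E) ⊆ A := by
    intro y hy
    rcases Finset.mem_coe.1 hy with hy'
    rcases Finset.mem_insert.1 hy' with rfl | hy''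
    · exact hx
    · exact hEA hy''
  have hmem : (insert x E).card ∈ K := ⟨insert x E, hsubA, hsep', rfl⟩
  have hle := le_csSup hKbdd hmem
  rw [Finset.card_insert_of_notMem hxE, hcard] at hle
  omega

end Sep
section SepCount

open Metric

variable {X : Type*} [MetricSpace X] [CompactSpace X] [Nonempty X]

/-- Covering number is at most the cardinality of a maximal separated set. -/
lemma coverNum_le_maxSep (T : X → X) (CU : FinOpenCover X) {δ : ℝ} (hδ : 0 < δ)
    (hLeb : ∀ y : X, ∃ u, ball y (3*δ) ⊆ CU.U u) (n : ℕ) (A : Set X) (E : Finset X)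
    (hmax : ∀ x ∈ A, ∃ y ∈ E, ∀ k < n, dist (T^[k] x) (T^[k] y) ≤ δ) :
    coverNum (fun σ : Fin n → Fin CU.n => dynSet T CU.U n σ) A ≤ E.card := by
  classical
  choose g hg using hLeb
  set sig : X → (Fin n → Fin CU.n) := fun y k => g (T^[(k : ℕ)] y) with hsig
  have hcov : A ⊆ ⋃ σ ∈ E.image sig, dynSet T CU.U n σ := by
    intro x hx
    obtain ⟨y, hyE, hy⟩ := hmax x hx
    refine Set.mem_biUnion (Finset.mem_image_of_mem sig hyE) ?_
    refine Set.mem_iInter.2 fun k => ?_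
    have h1 : dist (T^[(k : ℕ)] x) (T^[(k : ℕ)] y) ≤ δ := hy k k.2
    refine hg (T^[(k : ℕ)] y) ?_
    exact mem_ball'.2 (by rw [dist_comm]; linarith)
  exact (coverNum_le_card hcov).trans (Finset.card_image_le)

/-- A separated set in `A` is dominated by the sum of sups over `A` of the members
of the dynamical join of a partition of unity with small supports. -/
lemma maxSep_le_sum (T : X → X) (Φ : PartUnity X) {δ : ℝ}
    (hdiam : ∀ i, Metric.diam (tsupport (Φ.f i)) < δ) (n : ℕ) (A : Set X)
    (E : Finset X) (hEA : ↑E ⊆ A) (hsep : IsSep T n δ E) :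
    (E.card : ℝ) ≤ ∑ i, ⨆ x ∈ A, (PartUnity.dyn T Φ n).f i x := by
  classical
  have key : ∀ i, ∀ y ∈ E, ∀ z ∈ E, (PartUnity.dyn T Φ n).f i y ≠ 0 →
      (PartUnity.dyn T Φ n).f i z ≠ 0 → y = z := by
    intro i y hy z hz hfy hfz
    by_contra hne
    obtain ⟨k, hk, hd⟩ := hsep y hy z hz hne
    set σ := (dynEquiv T Φ n).symm i with hσ
    have hiy : (PartUnity.dyn T Φ n).f (dynEquiv T Φ n σ) y ≠ 0 := by
      rwa [hσ, Equiv.apply_symm_apply]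
    have hiz : (PartUnity.dyn T Φ n).f (dynEquiv T Φ n σ) z ≠ 0 := by
      rwa [hσ, Equiv.apply_symm_apply]
    rw [dyn_f_eq] at hiy hiz
    have hy' := Finset.prod_ne_zero_iff.1 hiy
    have hz' := Finset.prod_ne_zero_iff.1 hiz
    have hky : T^[k] y ∈ tsupport (Φ.f (σ ⟨k, hk⟩)) :=
      subset_tsupport _ (by simpa using hy' ⟨k, hk⟩ (Finset.mem_univ _))
    have hkz : T^[k] z ∈ tsupport (Φ.f (σ ⟨k, hk⟩)) :=
      subset_tsupport _ (by simpa using hz' ⟨k, hk⟩ (Finset.mem_univ _))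
    have hbd : Bornology.IsBounded (tsupport (Φ.f (σ ⟨k, hk⟩))) :=
      isCompact_univ.isBounded.subset (Set.subset_univ _)
    have := Metric.dist_le_diam_of_mem hbd hky hkz
    linarith [hdiam (σ ⟨k, hk⟩)]
  have hcard : (E.card : ℝ) = ∑ y ∈ E, ∑ i, (PartUnity.dyn T Φ n).f i y := by
    rw [Finset.sum_congr rfl fun y _ => (PartUnity.dyn T Φ n).sum_one y]
    simp
  rw [hcard, Finset.sum_comm]
  refine Finset.sum_le_sum fun i _ => ?_
  by_cases hz : ∀ y ∈ E, (PartUnity.dyn T Φ n).f i y = 0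
  · rw [Finset.sum_eq_zero hz]
    exact real_biSup_nonneg fun x => (PartUnity.dyn T Φ n).nonneg i x
  · push_neg at hz
    obtain ⟨y₀, hy₀, hfy₀⟩ := hz
    have hsum : ∑ y ∈ E, (PartUnity.dyn T Φ n).f i y = (PartUnity.dyn T Φ n).f i y₀ := by
      refine Finset.sum_eq_single_of_mem y₀ hy₀ fun y hy hne => ?_
      by_contra hfy
      exact hne (key i y hy y₀ hy₀ hfy hfy₀)
    rw [hsum]
    exact real_le_biSup (fun x => (PartUnity.dyn T Φ n).le_one i x) (hEA hy₀)

end SepCount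
section TailStatFacts

variable {X : Type*} [MetricSpace X] [CompactSpace X] [Nonempty X]

omit [CompactSpace X] in
lemma condTopStatPU_nonneg (Φ : PartUnity X) (ψ : X → ℝ) : 0 ≤ condTopStatPU Φ ψ :=
  Finset.sum_nonneg fun i _ => real_biSup_nonneg fun x => Φ.nonneg i x

omit [CompactSpace X] in
lemma condTopStatPU_le (Φ : PartUnity X) (ψ : X → ℝ) : condTopStatPU Φ ψ ≤ (Φ.n : ℝ) := by
  have h : ∀ i : Fin Φ.n, (⨆ x ∈ tsupport ψ, Φ.f i x) ≤ 1 := fun i =>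
    real_biSup_le zero_le_one fun x _ => Φ.le_one i x
  calc condTopStatPU Φ ψ ≤ ∑ _i : Fin Φ.n, (1 : ℝ) := Finset.sum_le_sum fun i _ => h i
  _ = (Φ.n : ℝ) := by simp

omit [CompactSpace X] in
lemma weights_nonneg {Ψ : PartUnity X} {a : Fin Ψ.n → ℝ} (ha : a ∈ weights Ψ) (j : Fin Ψ.n) :
    0 ≤ a j := by
  refine le_trans ?_ (ha.1 j).1
  exact Real.iInf_nonneg fun x => Ψ.nonneg j x

omit [CompactSpace X] in
lemma weights_le_one {Ψ : PartUnity X} {a : Fin Ψ.n → ℝ} (ha : a ∈ weights Ψ) (j : Fin Ψ.n) :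
    a j ≤ 1 := by
  refine (ha.1 j).2.trans ?_
  exact Real.iSup_le (fun x => Ψ.le_one j x) zero_le_one

omit [CompactSpace X] in
lemma weights_eval (Ψ : PartUnity X) (x : X) : (fun j => Ψ.f j x) ∈ weights Ψ := by
  refine ⟨fun j => ⟨?_, ?_⟩, Ψ.sum_one x⟩
  · exact ciInf_le ⟨0, by rintro _ ⟨y, rfl⟩; exact Ψ.nonneg j y⟩ x
  · exact le_ciSup ⟨1, by rintro _ ⟨y, rfl⟩; exact Ψ.le_one j y⟩ x

omit [CompactSpace X] in
lemma tailStat_mem_le (T : X → X) (Φ Ψ : PartUnity X) (n : ℕ) {r : ℝ}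
    (hr : r ∈ {r | ∃ a ∈ weights (PartUnity.dyn T Ψ n),
      r = ∑ j, a j * condTopStatPU (PartUnity.dyn T Φ n) ((PartUnity.dyn T Ψ n).f j)}) :
    r ≤ ((PartUnity.dyn T Ψ n).n : ℝ) * ((PartUnity.dyn T Φ n).n : ℝ) := by
  obtain ⟨a, ha, rfl⟩ := hr
  calc ∑ j, a j * condTopStatPU (PartUnity.dyn T Φ n) ((PartUnity.dyn T Ψ n).f j)
      ≤ ∑ _j : Fin (PartUnity.dyn T Ψ n).n, 1 * ((PartUnity.dyn T Φ n).n : ℝ) := by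
        refine Finset.sum_le_sum fun j _ => ?_
        exact mul_le_mul (weights_le_one ha j) (condTopStatPU_le _ _)
          (condTopStatPU_nonneg _ _) zero_le_one
  _ = ((PartUnity.dyn T Ψ n).n : ℝ) * ((PartUnity.dyn T Φ n).n : ℝ) := by simp [mul_comm]

omit [CompactSpace X] in
lemma le_tailStat (T : X → X) (Φ Ψ : PartUnity X) (n : ℕ) (a : Fin (PartUnity.dyn T Ψ n).n → ℝ)
    (ha : a ∈ weights (PartUnity.dyn T Ψ n)) :
    (∑ j, a j * condTopStatPU (PartUnity.dyn T Φ n) ((PartUnity.dyn T Ψ n).f j))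
      ≤ tailStat T Φ Ψ n :=
  le_csSup ⟨_, fun r hr => tailStat_mem_le T Φ Ψ n hr⟩ ⟨a, ha, rfl⟩

omit [CompactSpace X] in
lemma tailStat_le (T : X → X) (Φ Ψ : PartUnity X) (n : ℕ) {C : ℝ} (hC : 0 ≤ C)
    (h : ∀ j, condTopStatPU (PartUnity.dyn T Φ n) ((PartUnity.dyn T Ψ n).f j) ≤ C) :
    tailStat T Φ Ψ n ≤ C := by
  refine Real.sSup_le ?_ hC
  rintro r ⟨a, ha, rfl⟩
  calc ∑ j, a j * condTopStatPU (PartUnity.dyn T Φ n) ((PartUnity.dyn T Ψ n).f j)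
      ≤ ∑ j, a j * C := by
        refine Finset.sum_le_sum fun j _ => ?_
        exact mul_le_mul_of_nonneg_left (h j) (weights_nonneg ha j)
  _ = C := by rw [← Finset.sum_mul, ha.2, one_mul]

omit [CompactSpace X] in
lemma one_le_tailStat (T : X → X) (Φ Ψ : PartUnity X) (n : ℕ) :
    1 ≤ tailStat T Φ Ψ n := by
  obtain ⟨x₀⟩ := (inferInstance : Nonempty X)
  have hle := le_tailStat T Φ Ψ n _ (weights_eval (PartUnity.dyn T Ψ n) x₀)
  refine le_trans ?_ hle
  have key : ∀ j, (PartUnity.dyn T Ψ n).f j x₀ ≤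
      (PartUnity.dyn T Ψ n).f j x₀ * condTopStatPU (PartUnity.dyn T Φ n)
        ((PartUnity.dyn T Ψ n).f j) := by
    intro j
    by_cases hj : (PartUnity.dyn T Ψ n).f j x₀ = 0
    · rw [hj, zero_mul]
    · have hx₀ : x₀ ∈ tsupport ((PartUnity.dyn T Ψ n).f j) := subset_tsupport _ hj
      have h1 : (1 : ℝ) ≤ condTopStatPU (PartUnity.dyn T Φ n) ((PartUnity.dyn T Ψ n).f j) := by
        have : (1 : ℝ) = ∑ i, (PartUnity.dyn T Φ n).f i x₀ :=
          ((PartUnity.dyn T Φ n).sum_one x₀).symm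
        rw [this]
        refine Finset.sum_le_sum fun i _ => ?_
        exact real_le_biSup (fun x => (PartUnity.dyn T Φ n).le_one i x) hx₀
      nth_rewrite 1 [← mul_one ((PartUnity.dyn T Ψ n).f j x₀)]
      exact mul_le_mul_of_nonneg_left h1 ((PartUnity.dyn T Ψ n).nonneg j x₀)
  calc (1 : ℝ) = ∑ j, (PartUnity.dyn T Ψ n).f j x₀ := ((PartUnity.dyn T Ψ n).sum_one x₀).symm
  _ ≤ _ := Finset.sum_le_sum fun j _ => key j

end TailStatFacts
section LimsupAux

open Filter

/-- Main real-sequence limsup comparison with an additive constant. -/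
lemma limsup_div_le_aux {a b : ℕ → ℝ} {c Ua Ub : ℝ}
    (ha0 : ∀ n, 0 ≤ a n) (hb0 : ∀ n, 0 ≤ b n) (haU : ∀ n, a n ≤ Ua) (hbU : ∀ n, b n ≤ Ub)
    (h : ∀ n, 1 ≤ n → a n ≤ b n + c) :
    Filter.atTop.limsup a ≤ Filter.atTop.limsup b + c := by
  have hbb : IsBoundedUnder (· ≤ ·) atTop b := ⟨Ub, by
    rw [Filter.eventually_map]; exact Eventually.of_forall hbU⟩
  have hbcob : IsCoboundedUnder (· ≤ ·) atTop b :=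
    IsBoundedUnder.isCoboundedUnder_le ⟨0, by
      rw [Filter.eventually_map]; exact Eventually.of_forall hb0⟩
  have hacob : IsCoboundedUnder (· ≤ ·) atTop a :=
    IsBoundedUnder.isCoboundedUnder_le ⟨0, by
      rw [Filter.eventually_map]; exact Eventually.of_forall ha0⟩
  have hbc : IsBoundedUnder (· ≤ ·) atTop (fun n => b n + c) := ⟨Ub + c, by
    rw [Filter.eventually_map]
    exact Eventually.of_forall fun n => add_le_add_left (hbU n) c⟩
  have hbccob : IsCoboundedUnder (· ≤ ·) atTop (fun n => b n + c) :=
    IsBoundedUnder.isCoboundedUnder_le ⟨0 + c, by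
      rw [Filter.eventually_map]
      exact Eventually.of_forall fun n => add_le_add_left (hb0 n) c⟩
  have h1 : Filter.atTop.limsup a ≤ Filter.atTop.limsup (fun n => b n + c) := by
    refine limsup_le_limsup ?_ hacob hbc
    filter_upwards [eventually_ge_atTop 1] with n hn
    exact h n hn
  refine h1.trans_eq ?_
  have := (OrderIso.addRight c).limsup_apply (f := atTop) (u := b) hbb hbcob
    (by simpa using hbc) (by simpa using hbccob)
  simpa using this.symm

end LimsupAux

section MoreFacts

variable {X : Type*} [MetricSpace X] [CompactSpace X] [Nonempty X]

omit [MetricSpace X] [CompactSpace X] [Nonempty X] in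
lemma dyn_card (T : X → X) (Φ : PartUnity X) : ∀ n, (PartUnity.dyn T Φ n).n = Φ.n ^ n
  | 0 => rfl
  | n + 1 => by
    show Φ.n * (PartUnity.dyn T Φ n).n = Φ.n ^ (n + 1)
    rw [dyn_card T Φ n, pow_succ]
    ring

omit [MetricSpace X] [CompactSpace X] [Nonempty X] in
lemma coverNum_empty {α : Type*} [Fintype α] (V : α → Set X) :
    coverNum V (∅ : Set X) = 0 :=
  Nat.le_zero.1 (Nat.sInf_le ⟨∅, by simp, by simp⟩)

omit [MetricSpace X] [CompactSpace X] in
lemma foc_nonempty [TopologicalSpace X] (C : FinOpenCover X) : Nonempty (Fin C.n) := by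
  obtain ⟨x₀⟩ := (inferInstance : Nonempty X)
  have hx : x₀ ∈ ⋃ i, C.U i := C.cov ▸ Set.mem_univ _
  obtain ⟨i, -⟩ := Set.mem_iUnion.1 hx
  exact ⟨i⟩

omit [MetricSpace X] in
/-- The Misiurewicz counting supremum is at least 1. -/
lemma one_le_misCount [TopologicalSpace X] (T : X → X) (CU CV : FinOpenCover X) (n : ℕ) :
    1 ≤ ⨆ τ : Fin n → Fin CV.n, coverNum (fun σ : Fin n → Fin CU.n => dynSet T CU.U n σ)
      (dynSet T CV.U n τ) := by
  obtain ⟨x₀⟩ := (inferInstance : Nonempty X)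
  obtain ⟨τ, hτ⟩ := exists_dynSet_mem T CV n x₀
  refine le_trans (one_le_coverNum ⟨x₀, hτ⟩ ((Set.subset_univ _).trans
    (dynSet_cover_univ T CU n))) ?_
  exact le_ciSup (f := fun τ : Fin n → Fin CV.n =>
    coverNum (fun σ : Fin n → Fin CU.n => dynSet T CU.U n σ) (dynSet T CV.U n τ))
    (Set.Finite.bddAbove (Set.finite_range _)) τ

omit [MetricSpace X] in
lemma misCount_le [TopologicalSpace X] (T : X → X) (CU CV : FinOpenCover X) (n : ℕ) :
    (⨆ τ : Fin n → Fin CV.n, coverNum (fun σ : Fin n → Fin CU.n => dynSet T CU.U n σ)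
      (dynSet T CV.U n τ)) ≤ CU.n ^ n := by
  haveI : Nonempty (Fin CV.n) := foc_nonempty CV
  refine ciSup_le fun τ => ?_
  refine (coverNum_le_card (t := Finset.univ) ?_).trans ?_
  · intro x hx
    obtain ⟨σ, hσ⟩ := exists_dynSet_mem T CU n x
    exact Set.mem_biUnion (Finset.mem_univ σ) hσ
  · rw [Finset.card_univ]
    simp [Fintype.card_fun]

end MoreFacts
section CoreA

open Metric

variable {X : Type*} [MetricSpace X] [CompactSpace X] [Nonempty X]

lemma coreA (T : X → X) (hT : Continuous T) (Φ Ψ : PartUnity X) (CU CV : FinOpenCover X)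
    {ε : ℝ} (hε : 0 ≤ ε) (c : Fin Ψ.n → Fin CV.n)
    (hsub : ∀ j, tsupport (Ψ.f j) ⊆ CV.U (c j))
    (hosc : ∀ (u : Fin CU.n) (y z : X), y ∈ CU.U u → z ∈ CU.U u →
      ∀ i, Φ.f i y ≤ Φ.f i z + ε)
    (n : ℕ) :
    tailStat T Φ Ψ n ≤
      ((⨆ τ : Fin n → Fin CV.n, coverNum
        (fun σ : Fin n → Fin CU.n => dynSet T CU.U n σ) (dynSet T CV.U n τ) : ℕ) : ℝ) *
      (1 + (Φ.n : ℝ) * ε) ^ n := by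
  classical
  set M : ℕ := ⨆ τ : Fin n → Fin CV.n, coverNum
    (fun σ : Fin n → Fin CU.n => dynSet T CU.U n σ) (dynSet T CV.U n τ) with hM
  set P : ℝ := (1 + (Φ.n : ℝ) * ε) ^ n with hPdef
  have hP0 : (0 : ℝ) ≤ P := pow_nonneg (by positivity) n
  -- the per-cell estimate
  have hcell : ∀ σ' : Fin n → Fin CU.n,
      (∑ i, ⨆ x ∈ dynSet T CU.U n σ', (PartUnity.dyn T Φ n).f i x) ≤ P := by
    intro σ'
    rcases Set.eq_empty_or_nonempty (dynSet T CU.U n σ') with he | ⟨x₀, hx₀⟩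
    · have : ∀ i, (⨆ x ∈ dynSet T CU.U n σ', (PartUnity.dyn T Φ n).f i x) ≤ 0 := by
        intro i
        rw [he]
        exact real_biSup_le le_rfl (fun x hx => absurd hx (Set.notMem_empty x))
      exact le_trans (Finset.sum_le_sum fun i _ => this i) (by simpa using hP0)
    · have hbd : ∀ σ'' : Fin n → Fin Φ.n,
          (⨆ x ∈ dynSet T CU.U n σ', (PartUnity.dyn T Φ n).f (dynEquiv T Φ n σ'') x) ≤
            ∏ k : Fin n, (Φ.f (σ'' k) (T^[(k : ℕ)] x₀) + ε) := by
        intro σ''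
        refine real_biSup_le (Finset.prod_nonneg fun k _ => by
          have := Φ.nonneg (σ'' k) (T^[(k : ℕ)] x₀); linarith) ?_
        intro x hx
        rw [dyn_f_eq]
        refine Finset.prod_le_prod (fun k _ => Φ.nonneg _ _) (fun k _ => ?_)
        exact hosc (σ' k) (T^[(k : ℕ)] x) (T^[(k : ℕ)] x₀)
          (Set.mem_iInter.1 hx k) (Set.mem_iInter.1 hx₀ k) (σ'' k)
      calc (∑ i, ⨆ x ∈ dynSet T CU.U n σ', (PartUnity.dyn T Φ n).f i x)
          = ∑ σ'' : Fin n → Fin Φ.n,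
            ⨆ x ∈ dynSet T CU.U n σ', (PartUnity.dyn T Φ n).f (dynEquiv T Φ n σ'') x :=
            (Equiv.sum_comp (dynEquiv T Φ n) _).symm
        _ ≤ ∑ σ'' : Fin n → Fin Φ.n, ∏ k : Fin n, (Φ.f (σ'' k) (T^[(k : ℕ)] x₀) + ε) :=
            Finset.sum_le_sum fun σ'' _ => hbd σ''
        _ = ∏ k : Fin n, ∑ i : Fin Φ.n, (Φ.f i (T^[(k : ℕ)] x₀) + ε) := by
            rw [show (Finset.univ : Finset (Fin n → Fin Φ.n)) =
              Fintype.piFinset (fun _ : Fin n => (Finset.univ : Finset (Fin Φ.n)))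
              from Fintype.piFinset_univ.symm]
            exact (Finset.prod_univ_sum (fun _ : Fin n => (Finset.univ : Finset (Fin Φ.n)))
              (fun (k : Fin n) (i : Fin Φ.n) => Φ.f i (T^[(k : ℕ)] x₀) + ε)).symm
        _ = ∏ _k : Fin n, (1 + (Φ.n : ℝ) * ε) := by
            refine Finset.prod_congr rfl fun k _ => ?_
            rw [Finset.sum_add_distrib, Φ.sum_one, Finset.sum_const, Finset.card_univ,
              Fintype.card_fin, nsmul_eq_mul]
        _ = P := by rw [Finset.prod_const, Finset.card_univ, Fintype.card_fin]
  refine tailStat_le T Φ Ψ n (mul_nonneg (Nat.cast_nonneg _) hP0) (fun j => ?_)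
  set σ := (dynEquiv T Ψ n).symm j with hσdef
  set τ : Fin n → Fin CV.n := fun k => c (σ k) with hτdef
  have hSsub : tsupport ((PartUnity.dyn T Ψ n).f j) ⊆ dynSet T CV.U n τ := by
    have hj : (PartUnity.dyn T Ψ n).f j =
        (PartUnity.dyn T Ψ n).f (dynEquiv T Ψ n σ) := by rw [hσdef, Equiv.apply_symm_apply]
    rw [hj]
    refine (tsupport_dyn_subset T hT Ψ n σ).trans ?_
    exact Set.iInter_mono fun k => Set.preimage_mono (hsub (σ k))
  obtain ⟨t, htc, htcov⟩ := exists_coverNum (V := fun σ' : Fin n → Fin CU.n =>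
    dynSet T CU.U n σ') (S := dynSet T CV.U n τ)
    ((Set.subset_univ _).trans (dynSet_cover_univ T CU n))
  have htM : (t.card : ℝ) ≤ (M : ℝ) := by
    have : coverNum (fun σ' : Fin n → Fin CU.n => dynSet T CU.U n σ')
        (dynSet T CV.U n τ) ≤ M :=
      le_ciSup (f := fun τ' : Fin n → Fin CV.n => coverNum
        (fun σ' : Fin n → Fin CU.n => dynSet T CU.U n σ') (dynSet T CV.U n τ'))
        (Set.Finite.bddAbove (Set.finite_range _)) τ
    exact_mod_cast htc ▸ this
  have hsum : condTopStatPU (PartUnity.dyn T Φ n) ((PartUnity.dyn T Ψ n).f j) ≤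
      ∑ σ' ∈ t, ∑ i, ⨆ x ∈ dynSet T CU.U n σ', (PartUnity.dyn T Φ n).f i x := by
    have hper : ∀ i, (⨆ x ∈ tsupport ((PartUnity.dyn T Ψ n).f j),
        (PartUnity.dyn T Φ n).f i x) ≤
        ∑ σ' ∈ t, ⨆ x ∈ dynSet T CU.U n σ', (PartUnity.dyn T Φ n).f i x := by
      intro i
      refine real_biSup_le (Finset.sum_nonneg fun σ' _ =>
        real_biSup_nonneg fun x => (PartUnity.dyn T Φ n).nonneg i x) ?_
      intro x hx
      obtain ⟨σ', hσ't, hxσ'⟩ := Set.mem_iUnion₂.1 (htcov (hSsub hx))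
      refine le_trans (real_le_biSup (fun y => (PartUnity.dyn T Φ n).le_one i y) hxσ') ?_
      exact Finset.single_le_sum (fun σ'' _ =>
        real_biSup_nonneg fun y => (PartUnity.dyn T Φ n).nonneg i y) hσ't
    calc condTopStatPU (PartUnity.dyn T Φ n) ((PartUnity.dyn T Ψ n).f j)
        ≤ ∑ i, ∑ σ' ∈ t, ⨆ x ∈ dynSet T CU.U n σ', (PartUnity.dyn T Φ n).f i x :=
          Finset.sum_le_sum fun i _ => hper i
      _ = _ := Finset.sum_comm
  calc condTopStatPU (PartUnity.dyn T Φ n) ((PartUnity.dyn T Ψ n).f j)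
      ≤ ∑ σ' ∈ t, ∑ i, ⨆ x ∈ dynSet T CU.U n σ', (PartUnity.dyn T Φ n).f i x := hsum
    _ ≤ ∑ _σ' ∈ t, P := Finset.sum_le_sum fun σ' _ => hcell σ'
    _ = (t.card : ℝ) * P := by rw [Finset.sum_const, nsmul_eq_mul]
    _ ≤ (M : ℝ) * P := mul_le_mul_of_nonneg_right htM hP0

end CoreA
section CoreB

open Metric

variable {X : Type*} [MetricSpace X] [CompactSpace X] [Nonempty X]

lemma coreB (T : X → X) (hT : Continuous T) (Φ Ψ : PartUnity X) (CU CV : FinOpenCover X)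
    {ε δ : ℝ} (hε : 0 < ε) (hδ : 0 < δ) (h1 : 0 < 1 - (Ψ.n : ℝ) * ε)
    (decode : Fin CV.n → Finset (Fin Ψ.n))
    (hV : ∀ (v : Fin CV.n) (x : X), x ∈ CV.U v →
      (∀ j ∈ decode v, ε/2 < Ψ.f j x) ∧ (∀ j ∉ decode v, Ψ.f j x < ε))
    (hdiam : ∀ i, Metric.diam (tsupport (Φ.f i)) < δ)
    (hLeb : ∀ y : X, ∃ u, ball y (3*δ) ⊆ CU.U u)
    (n : ℕ) (τ : Fin n → Fin CV.n) :
    ((coverNum (fun σ : Fin n → Fin CU.n => dynSet T CU.U n σ)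
      (dynSet T CV.U n τ) : ℕ) : ℝ) * (1 - (Ψ.n : ℝ) * ε) ^ n ≤ tailStat T Φ Ψ n := by
  classical
  set W := dynSet T CV.U n τ with hW
  rcases Set.eq_empty_or_nonempty W with he | ⟨xs, hxs⟩
  · rw [he, coverNum_empty]
    simpa using le_trans zero_le_one (one_le_tailStat T Φ Ψ n)
  · set S : Fin n → Finset (Fin Ψ.n) := fun k => decode (τ k) with hS
    have hxsk : ∀ k : Fin n, T^[(k : ℕ)] xs ∈ CV.U (τ k) := Set.mem_iInter.1 hxs
    set G : Finset (Fin n → Fin Ψ.n) := Fintype.piFinset S with hG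
    set cN : ℕ := coverNum (fun σ : Fin n → Fin CU.n => dynSet T CU.U n σ) W with hcN
    -- (1) W is inside the support of every "good" cell
    have hWsub : ∀ σ ∈ G, W ⊆ tsupport ((PartUnity.dyn T Ψ n).f (dynEquiv T Ψ n σ)) := by
      intro σ hσ x hx
      have hpos : 0 < (PartUnity.dyn T Ψ n).f (dynEquiv T Ψ n σ) x := by
        rw [dyn_f_pos_iff]
        intro k
        have hk : T^[(k : ℕ)] x ∈ CV.U (τ k) := Set.mem_iInter.1 hx k
        have := (hV (τ k) _ hk).1 (σ k) (Fintype.mem_piFinset.1 hσ k)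
        linarith
      exact subset_tsupport _ (ne_of_gt hpos)
    -- (2) the covering number bounds every good conditional static entropy
    have hcount : ∀ σ ∈ G, (cN : ℝ) ≤
        condTopStatPU (PartUnity.dyn T Φ n) ((PartUnity.dyn T Ψ n).f (dynEquiv T Ψ n σ)) := by
      intro σ hσ
      set A := tsupport ((PartUnity.dyn T Ψ n).f (dynEquiv T Ψ n σ)) with hA
      obtain ⟨E, hEA, hsep, hmax⟩ := exists_max_sep T hT n hδ A
      have s1 : cN ≤ coverNum (fun σ' : Fin n → Fin CU.n => dynSet T CU.U n σ') A :=
        coverNum_mono (hWsub σ hσ) ((Set.subset_univ _).trans (dynSet_cover_univ T CU n))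
      have s2 : coverNum (fun σ' : Fin n → Fin CU.n => dynSet T CU.U n σ') A ≤ E.card :=
        coverNum_le_maxSep T CU hδ hLeb n A E hmax
      have s3 : (E.card : ℝ) ≤ ∑ i, ⨆ x ∈ A, (PartUnity.dyn T Φ n).f i x :=
        maxSep_le_sum T Φ hdiam n A E hEA hsep
      exact le_trans (by exact_mod_cast s1.trans s2) s3
    -- (3) the total weight of good cells at xs
    have hweight : (1 - (Ψ.n : ℝ) * ε) ^ n ≤
        ∑ σ ∈ G, (PartUnity.dyn T Ψ n).f (dynEquiv T Ψ n σ) xs := by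
      have heq : ∑ σ ∈ G, (PartUnity.dyn T Ψ n).f (dynEquiv T Ψ n σ) xs =
          ∏ k : Fin n, ∑ i ∈ S k, Ψ.f i (T^[(k : ℕ)] xs) := by
        rw [Finset.prod_univ_sum S (fun (k : Fin n) (i : Fin Ψ.n) => Ψ.f i (T^[(k : ℕ)] xs))]
        exact Finset.sum_congr rfl fun σ _ => (dyn_f_eq T Ψ n σ xs)
      have hpc : (1 - (Ψ.n : ℝ) * ε) ^ n = ∏ _k : Fin n, (1 - (Ψ.n : ℝ) * ε) := by
        rw [Finset.prod_const, Finset.card_univ, Fintype.card_fin]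
      rw [heq, hpc]
      refine Finset.prod_le_prod (fun k _ => h1.le) (fun k _ => ?_)
      have hcompl : ∑ i ∈ (S k)ᶜ, Ψ.f i (T^[(k : ℕ)] xs) ≤ (Ψ.n : ℝ) * ε := by
        have hle : ∀ i ∈ (S k)ᶜ, Ψ.f i (T^[(k : ℕ)] xs) ≤ ε := fun i hi =>
          ((hV (τ k) _ (hxsk k)).2 i (Finset.mem_compl.1 hi)).le
        calc ∑ i ∈ (S k)ᶜ, Ψ.f i (T^[(k : ℕ)] xs) ≤ ((S k)ᶜ.card : ℝ) * ε := by
              have := Finset.sum_le_card_nsmul ((S k)ᶜ) _ ε hle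
              rwa [nsmul_eq_mul] at this
          _ ≤ (Ψ.n : ℝ) * ε := by
              refine mul_le_mul_of_nonneg_right ?_ hε.le
              exact_mod_cast (Finset.card_le_univ _).trans_eq (by simp)
      have hsplit : ∑ i ∈ S k, Ψ.f i (T^[(k : ℕ)] xs) +
          ∑ i ∈ (S k)ᶜ, Ψ.f i (T^[(k : ℕ)] xs) = 1 := by
        rw [Finset.sum_add_sum_compl]
        exact Ψ.sum_one _
      linarith
    -- (4) put everything together
    have hfinal : (cN : ℝ) * (1 - (Ψ.n : ℝ) * ε) ^ n ≤ tailStat T Φ Ψ n := by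
      have hstep1 : (cN : ℝ) * (1 - (Ψ.n : ℝ) * ε) ^ n ≤
          (cN : ℝ) * ∑ σ ∈ G, (PartUnity.dyn T Ψ n).f (dynEquiv T Ψ n σ) xs :=
        mul_le_mul_of_nonneg_left hweight (Nat.cast_nonneg _)
      have hstep2 : (cN : ℝ) * ∑ σ ∈ G, (PartUnity.dyn T Ψ n).f (dynEquiv T Ψ n σ) xs ≤
          ∑ σ ∈ G, (PartUnity.dyn T Ψ n).f (dynEquiv T Ψ n σ) xs *
            condTopStatPU (PartUnity.dyn T Φ n)
              ((PartUnity.dyn T Ψ n).f (dynEquiv T Ψ n σ)) := by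
        rw [Finset.mul_sum]
        refine Finset.sum_le_sum fun σ hσ => ?_
        rw [mul_comm ((cN : ℝ)) _]
        exact mul_le_mul_of_nonneg_left (hcount σ hσ) ((PartUnity.dyn T Ψ n).nonneg _ _)
      have hstep3 : ∑ σ ∈ G, (PartUnity.dyn T Ψ n).f (dynEquiv T Ψ n σ) xs *
          condTopStatPU (PartUnity.dyn T Φ n) ((PartUnity.dyn T Ψ n).f (dynEquiv T Ψ n σ)) ≤
          ∑ j, (PartUnity.dyn T Ψ n).f j xs *
            condTopStatPU (PartUnity.dyn T Φ n) ((PartUnity.dyn T Ψ n).f j) := by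
        rw [show (∑ σ ∈ G, (PartUnity.dyn T Ψ n).f (dynEquiv T Ψ n σ) xs *
            condTopStatPU (PartUnity.dyn T Φ n)
              ((PartUnity.dyn T Ψ n).f (dynEquiv T Ψ n σ))) =
          ∑ j ∈ G.image (dynEquiv T Ψ n), (PartUnity.dyn T Ψ n).f j xs *
            condTopStatPU (PartUnity.dyn T Φ n) ((PartUnity.dyn T Ψ n).f j) from
          (Finset.sum_image (f := fun j => (PartUnity.dyn T Ψ n).f j xs *
              condTopStatPU (PartUnity.dyn T Φ n) ((PartUnity.dyn T Ψ n).f j))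
            (g := dynEquiv T Ψ n) (s := G)
            (fun a _ b _ h => (dynEquiv T Ψ n).injective h)).symm]
        refine Finset.sum_le_sum_of_subset_of_nonneg (Finset.subset_univ _) ?_
        intro j _ _
        exact mul_nonneg ((PartUnity.dyn T Ψ n).nonneg _ _) (condTopStatPU_nonneg _ _)
      have hstep4 : ∑ j, (PartUnity.dyn T Ψ n).f j xs *
          condTopStatPU (PartUnity.dyn T Φ n) ((PartUnity.dyn T Ψ n).f j) ≤
          tailStat T Φ Ψ n :=
        le_tailStat T Φ Ψ n _ (weights_eval (PartUnity.dyn T Ψ n) xs)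
      linarith
    exact hfinal

end CoreB
section SeqBounds

open Metric

variable {X : Type*} [MetricSpace X] [CompactSpace X] [Nonempty X]

omit [CompactSpace X] in
lemma tailStat_le_card (T : X → X) (Φ Ψ : PartUnity X) (n : ℕ) :
    tailStat T Φ Ψ n ≤ ((PartUnity.dyn T Ψ n).n : ℝ) * ((PartUnity.dyn T Φ n).n : ℝ) :=
  Real.sSup_le (fun _ hr => tailStat_mem_le T Φ Ψ n hr)
    (mul_nonneg (Nat.cast_nonneg _) (Nat.cast_nonneg _))

omit [CompactSpace X] in
lemma tailSeq_nonneg (T : X → X) (Φ Ψ : PartUnity X) (n : ℕ) :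
    0 ≤ Real.log (tailStat T Φ Ψ n) / (n : ℝ) :=
  div_nonneg (Real.log_nonneg (one_le_tailStat T Φ Ψ n)) (Nat.cast_nonneg n)

omit [CompactSpace X] in
lemma tailSeq_le (T : X → X) (Φ Ψ : PartUnity X) (n : ℕ) :
    Real.log (tailStat T Φ Ψ n) / (n : ℝ) ≤ Real.log ((Ψ.n : ℝ) * (Φ.n : ℝ)) := by
  have h1 : (1 : ℝ) ≤ (Ψ.n : ℝ) * (Φ.n : ℝ) := by
    have := pu_n_pos Ψ; have := pu_n_pos Φ
    have hΨ : (1 : ℝ) ≤ (Ψ.n : ℝ) := by exact_mod_cast pu_n_pos Ψ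
    have hΦ : (1 : ℝ) ≤ (Φ.n : ℝ) := by exact_mod_cast pu_n_pos Φ
    nlinarith
  rcases Nat.eq_zero_or_pos n with rfl | hn
  · simp [Real.log_nonneg h1]
  · have hnpos : (0 : ℝ) < n := by exact_mod_cast hn
    rw [div_le_iff₀ hnpos]
    have hle : tailStat T Φ Ψ n ≤ ((Ψ.n : ℝ) * (Φ.n : ℝ)) ^ n := by
      refine (tailStat_le_card T Φ Ψ n).trans ?_
      rw [dyn_card, dyn_card, mul_pow]
      push_cast
      exact le_rfl
    calc Real.log (tailStat T Φ Ψ n) ≤ Real.log (((Ψ.n : ℝ) * (Φ.n : ℝ)) ^ n) :=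
          Real.log_le_log (lt_of_lt_of_le zero_lt_one (one_le_tailStat T Φ Ψ n)) hle
      _ = Real.log ((Ψ.n : ℝ) * (Φ.n : ℝ)) * (n : ℝ) := by rw [Real.log_pow]; ring

omit [MetricSpace X] [CompactSpace X] in
lemma misSeq_nonneg [TopologicalSpace X] (T : X → X) (CU CV : FinOpenCover X) (n : ℕ) :
    0 ≤ Real.log (((⨆ τ : Fin n → Fin CV.n, coverNum
      (fun σ : Fin n → Fin CU.n => dynSet T CU.U n σ) (dynSet T CV.U n τ) : ℕ)) : ℝ) / (n : ℝ) := by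
  refine div_nonneg (Real.log_nonneg ?_) (Nat.cast_nonneg n)
  exact_mod_cast one_le_misCount T CU CV n

omit [MetricSpace X] [CompactSpace X] in
lemma misSeq_le [TopologicalSpace X] (T : X → X) (CU CV : FinOpenCover X) (n : ℕ) :
    Real.log (((⨆ τ : Fin n → Fin CV.n, coverNum
      (fun σ : Fin n → Fin CU.n => dynSet T CU.U n σ) (dynSet T CV.U n τ) : ℕ)) : ℝ) / (n : ℝ)
      ≤ Real.log ((CU.n : ℝ)) := by
  have hCU : (1 : ℝ) ≤ (CU.n : ℝ) := by
    have := foc_nonempty CU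
    have : 0 < CU.n := Fin.pos_iff_nonempty.2 this
    exact_mod_cast this
  rcases Nat.eq_zero_or_pos n with rfl | hn
  · simp [Real.log_nonneg hCU]
  · have hnpos : (0 : ℝ) < n := by exact_mod_cast hn
    rw [div_le_iff₀ hnpos]
    have h1 : (1 : ℝ) ≤ (((⨆ τ : Fin n → Fin CV.n, coverNum
        (fun σ : Fin n → Fin CU.n => dynSet T CU.U n σ) (dynSet T CV.U n τ) : ℕ)) : ℝ) := by
      exact_mod_cast one_le_misCount T CU CV n
    have h2 : (((⨆ τ : Fin n → Fin CV.n, coverNum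
        (fun σ : Fin n → Fin CU.n => dynSet T CU.U n σ) (dynSet T CV.U n τ) : ℕ)) : ℝ) ≤
        ((CU.n : ℝ)) ^ n := by
      have := misCount_le T CU CV n
      calc (((⨆ τ : Fin n → Fin CV.n, coverNum
          (fun σ : Fin n → Fin CU.n => dynSet T CU.U n σ) (dynSet T CV.U n τ) : ℕ)) : ℝ)
          ≤ ((CU.n ^ n : ℕ) : ℝ) := by exact_mod_cast this
        _ = ((CU.n : ℝ)) ^ n := by push_cast; ring
    calc Real.log _ ≤ Real.log (((CU.n : ℝ)) ^ n) :=
          Real.log_le_log (lt_of_lt_of_le zero_lt_one h1) h2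
      _ = Real.log ((CU.n : ℝ)) * (n : ℝ) := by rw [Real.log_pow]; ring

end SeqBounds
section DirA

open Metric Filter

variable {X : Type*} [MetricSpace X] [CompactSpace X] [Nonempty X]

lemma dirA (T : X → X) (hT : Continuous T) (CV : FinOpenCover X) :
    ∃ Ψ : PartUnity X, Ψ.Cont ∧ ∀ Φ : PartUnity X, Φ.Cont → ∀ η : ℝ, 0 < η →
      ∃ CU : FinOpenCover X, tailLoc T Φ Ψ ≤ misCondLoc T CU CV + η := by
  obtain ⟨δΨ, hδΨ, hpos, -⟩ := exists_subPU CV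
  refine ⟨subPU CV.U δΨ hpos, subPU_cont hpos, ?_⟩
  intro Φ hΦ η hη
  have hΦn : (0 : ℝ) < (Φ.n : ℝ) := by exact_mod_cast pu_n_pos Φ
  set ε : ℝ := (Real.exp η - 1) / (Φ.n : ℝ) with hεdef
  have hexp1 : (1 : ℝ) < Real.exp η := by
    calc (1 : ℝ) = Real.exp 0 := Real.exp_zero.symm
    _ < Real.exp η := Real.exp_lt_exp.2 hη
  have hε : 0 < ε := div_pos (by linarith) hΦn
  have hsum : 1 + (Φ.n : ℝ) * ε = Real.exp η := by
    rw [hεdef]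
    field_simp
    ring
  obtain ⟨δ', hδ'pos, hmod⟩ := exists_modulus Φ hΦ hε
  obtain ⟨t, ht⟩ := isCompact_univ.elim_finite_subcover (fun c : X => ball c (δ'/2))
    (fun _ => isOpen_ball) (fun x _ => Set.mem_iUnion.2 ⟨x, mem_ball_self (by linarith)⟩)
  have hcov : ⋃ i : Fin t.card, ball ((t.equivFin.symm i : t) : X) (δ'/2) = Set.univ := by
    refine subset_antisymm (Set.subset_univ _) ?_
    intro x _
    obtain ⟨c, hct, hxc⟩ := Set.mem_iUnion₂.1 (ht (Set.mem_univ x))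
    refine Set.mem_iUnion.2 ⟨t.equivFin ⟨c, hct⟩, ?_⟩
    rwa [Equiv.symm_apply_apply]
  set CU : FinOpenCover X :=
    ⟨t.card, fun i => ball ((t.equivFin.symm i : t) : X) (δ'/2), fun _ => isOpen_ball, hcov⟩
    with hCU
  refine ⟨CU, ?_⟩
  have hosc : ∀ (u : Fin CU.n) (y z : X), y ∈ CU.U u → z ∈ CU.U u →
      ∀ i, Φ.f i y ≤ Φ.f i z + ε := by
    intro u y z hy hz i
    have h1 : dist y ((t.equivFin.symm u : t) : X) < δ'/2 := mem_ball.1 hy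
    have h2 : dist z ((t.equivFin.symm u : t) : X) < δ'/2 := mem_ball.1 hz
    have hd : dist y z < δ' :=
      lt_of_le_of_lt (dist_triangle_right y z ((t.equivFin.symm u : t) : X)) (by linarith)
    exact hmod i y z hd
  have key : ∀ n : ℕ, 1 ≤ n →
      Real.log (tailStat T Φ (subPU CV.U δΨ hpos) n) / (n : ℝ) ≤
      Real.log (((⨆ τ : Fin n → Fin CV.n, coverNum
        (fun σ : Fin n → Fin CU.n => dynSet T CU.U n σ) (dynSet T CV.U n τ) : ℕ)) : ℝ) / (n : ℝ)
        + η := by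
    intro n hn
    have hnpos : (0 : ℝ) < (n : ℝ) := by exact_mod_cast hn
    have hcore := coreA T hT Φ (subPU CV.U δΨ hpos) CU CV hε.le (fun j => j)
      (fun j => subPU_tsupport hδΨ hpos j) hosc n
    rw [hsum] at hcore
    set M : ℕ := ⨆ τ : Fin n → Fin CV.n, coverNum
      (fun σ : Fin n → Fin CU.n => dynSet T CU.U n σ) (dynSet T CV.U n τ) with hMdef
    have hM1 : (1 : ℝ) ≤ (M : ℝ) := by exact_mod_cast one_le_misCount T CU CV n
    have hts1 : (1 : ℝ) ≤ tailStat T Φ (subPU CV.U δΨ hpos) n :=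
      one_le_tailStat T Φ _ n
    have hlog : Real.log (tailStat T Φ (subPU CV.U δΨ hpos) n) ≤
        Real.log (M : ℝ) + (n : ℝ) * η := by
      calc Real.log (tailStat T Φ (subPU CV.U δΨ hpos) n)
          ≤ Real.log ((M : ℝ) * Real.exp η ^ n) :=
            Real.log_le_log (by linarith) hcore
        _ = Real.log (M : ℝ) + (n : ℝ) * η := by
            rw [Real.log_mul (by linarith) (pow_ne_zero n (Real.exp_ne_zero η)),
              Real.log_pow, Real.log_exp]
    calc Real.log (tailStat T Φ (subPU CV.U δΨ hpos) n) / (n : ℝ)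
        ≤ (Real.log (M : ℝ) + (n : ℝ) * η) / (n : ℝ) := (div_le_div_iff_of_pos_right hnpos).2 hlog
      _ = Real.log (M : ℝ) / (n : ℝ) + η := by
          field_simp
  exact limsup_div_le_aux (tailSeq_nonneg T Φ _) (misSeq_nonneg T CU CV)
    (tailSeq_le T Φ _) (misSeq_le T CU CV) key

end DirA
section DirB

open Metric Filter

variable {X : Type*} [MetricSpace X] [CompactSpace X] [Nonempty X]

lemma dirB (T : X → X) (hT : Continuous T) (Ψ : PartUnity X) (hΨ : Ψ.Cont)
    (η : ℝ) (hη : 0 < η) :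
    ∃ CV : FinOpenCover X, ∀ CU : FinOpenCover X,
      ∃ Φ : PartUnity X, Φ.Cont ∧ misCondLoc T CU CV ≤ tailLoc T Φ Ψ + η := by
  classical
  have hm : (0 : ℝ) < (Ψ.n : ℝ) := by exact_mod_cast pu_n_pos Ψ
  have hexp : Real.exp (-η) < 1 := by
    calc Real.exp (-η) < Real.exp 0 := Real.exp_lt_exp.2 (by linarith)
    _ = 1 := Real.exp_zero
  set ε : ℝ := (1 - Real.exp (-η)) / (Ψ.n : ℝ) with hεdef
  have hε : 0 < ε := div_pos (by linarith) hm
  have h1eq : 1 - (Ψ.n : ℝ) * ε = Real.exp (-η) := by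
    rw [hεdef]
    field_simp
    ring
  have h1 : 0 < 1 - (Ψ.n : ℝ) * ε := h1eq ▸ Real.exp_pos (-η)
  -- the cover indexed by subsets of `Fin Ψ.n`
  set VS : Finset (Fin Ψ.n) → Set X := fun S =>
    {x | (∀ j ∈ S, ε/2 < Ψ.f j x) ∧ ∀ j ∉ S, Ψ.f j x < ε} with hVS
  have hVSopen : ∀ S, IsOpen (VS S) := by
    intro S
    have heq : VS S = (⋂ j ∈ S, (Ψ.f j) ⁻¹' Set.Ioi (ε/2)) ∩
        ⋂ j ∈ Sᶜ, (Ψ.f j) ⁻¹' Set.Iio ε := by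
      ext x
      simp only [hVS, Set.mem_setOf_eq, Set.mem_inter_iff, Set.mem_iInter,
        Set.mem_preimage, Set.mem_Ioi, Set.mem_Iio, Finset.mem_compl]
    rw [heq]
    exact (isOpen_biInter_finset fun j _ => (isOpen_Ioi).preimage (hΨ j)).inter
      (isOpen_biInter_finset fun j _ => (isOpen_Iio).preimage (hΨ j))
  set dec : Fin (Fintype.card (Finset (Fin Ψ.n))) → Finset (Fin Ψ.n) :=
    fun v => (Fintype.equivFin (Finset (Fin Ψ.n))).symm v with hdec
  have hVScov : ⋃ v, VS (dec v) = Set.univ := by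
    refine subset_antisymm (Set.subset_univ _) ?_
    intro x _
    set S : Finset (Fin Ψ.n) := Finset.univ.filter (fun j => ε ≤ Ψ.f j x) with hSdef
    have hxS : x ∈ VS S := by
      constructor
      · intro j hj
        have := (Finset.mem_filter.1 hj).2
        linarith
      · intro j hj
        have := Finset.mem_filter.not.1 hj
        push_neg at this
        exact this (Finset.mem_univ j)
    refine Set.mem_iUnion.2 ⟨Fintype.equivFin (Finset (Fin Ψ.n)) S, ?_⟩
    simpa [hdec] using hxS
  set CV : FinOpenCover X :=
    ⟨Fintype.card (Finset (Fin Ψ.n)), fun v => VS (dec v), fun v => hVSopen (dec v), hVScov⟩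
    with hCV
  refine ⟨CV, fun CU => ?_⟩
  -- Lebesgue number for CU and a fine partition of unity
  obtain ⟨δL, hδL, hLeb'⟩ := lebesgue_number_lemma_of_metric isCompact_univ CU.opn
    (by rw [CU.cov])
  set δ : ℝ := δL / 3 with hδdef
  have hδ : 0 < δ := by rw [hδdef]; linarith
  have hLeb : ∀ y : X, ∃ u, ball y (3*δ) ⊆ CU.U u := by
    intro y
    obtain ⟨u, hu⟩ := hLeb' y (Set.mem_univ y)
    exact ⟨u, by rwa [show 3*δ = δL by rw [hδdef]; ring]⟩
  set δ2 : ℝ := δ / 7 with hδ2def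
  have hδ2 : 0 < δ2 := by rw [hδ2def]; linarith
  obtain ⟨t, ht⟩ := isCompact_univ.elim_finite_subcover (fun c : X => ball c δ2)
    (fun _ => isOpen_ball) (fun x _ => Set.mem_iUnion.2 ⟨x, mem_ball_self hδ2⟩)
  set V : Fin t.card → Set X := fun i => ball ((t.equivFin.symm i : t) : X) (3*δ2) with hV
  have hposΦ : ∀ x : X, 0 < ∑ j, subG (V j) δ2 x := by
    intro x
    obtain ⟨c, hct, hxc⟩ := Set.mem_iUnion₂.1 (ht (Set.mem_univ x))
    set i : Fin t.card := t.equivFin ⟨c, hct⟩ with hi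
    have hball : ball x (2*δ2) ⊆ V i := by
      intro y hy
      have h1' : dist y x < 2*δ2 := mem_ball.1 hy
      have h2' : dist x c < δ2 := mem_ball.1 hxc
      have : dist y ((t.equivFin.symm i : t) : X) < 3*δ2 := by
        rw [hi, Equiv.symm_apply_apply]
        calc dist y c ≤ dist y x + dist x c := dist_triangle y x c
        _ < 3*δ2 := by linarith
      exact mem_ball.2 this
    exact lt_of_lt_of_le (subG_pos hδ2 hball)
      (Finset.single_le_sum (fun j _ => subG_nonneg _ _ _) (Finset.mem_univ i))
  set Φ : PartUnity X := subPU V δ2 hposΦ with hΦdef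
  have hΦcont : Φ.Cont := subPU_cont hposΦ
  have hdiam : ∀ i, Metric.diam (tsupport (Φ.f i)) < δ := by
    intro i
    have h1' : tsupport (Φ.f i) ⊆ V i := subPU_tsupport hδ2 hposΦ i
    have h2' : Metric.diam (tsupport (Φ.f i)) ≤ Metric.diam (V i) :=
      Metric.diam_mono h1' isBounded_ball
    have h3' : Metric.diam (V i) ≤ 2 * (3*δ2) := Metric.diam_ball (by linarith)
    calc Metric.diam (tsupport (Φ.f i)) ≤ 2 * (3*δ2) := h2'.trans h3'
    _ < δ := by rw [hδ2def]; linarith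
  refine ⟨Φ, hΦcont, ?_⟩
  -- decode property
  have hVprop : ∀ (v : Fin CV.n) (x : X), x ∈ CV.U v →
      (∀ j ∈ dec v, ε/2 < Ψ.f j x) ∧ (∀ j ∉ dec v, Ψ.f j x < ε) := fun v x hx => hx
  haveI : Nonempty (Fin CV.n) := foc_nonempty CV
  have key : ∀ n : ℕ, 1 ≤ n →
      Real.log (((⨆ τ : Fin n → Fin CV.n, coverNum
        (fun σ : Fin n → Fin CU.n => dynSet T CU.U n σ) (dynSet T CV.U n τ) : ℕ)) : ℝ) / (n : ℝ)
      ≤ Real.log (tailStat T Φ Ψ n) / (n : ℝ) + η := by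
    intro n hn
    have hnpos : (0 : ℝ) < (n : ℝ) := by exact_mod_cast hn
    obtain ⟨τ₀, hτ₀⟩ := exists_eq_ciSup_of_finite
      (f := fun τ : Fin n → Fin CV.n => coverNum
        (fun σ : Fin n → Fin CU.n => dynSet T CU.U n σ) (dynSet T CV.U n τ))
    set M : ℕ := ⨆ τ : Fin n → Fin CV.n, coverNum
      (fun σ : Fin n → Fin CU.n => dynSet T CU.U n σ) (dynSet T CV.U n τ) with hMdef
    have hcore := coreB T hT Φ Ψ CU CV hε hδ h1 dec hVprop hdiam hLeb n τ₀
    rw [hτ₀] at hcore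
    rw [h1eq] at hcore
    -- hcore : (M:ℝ) * exp(-η)^n ≤ tailStat
    have hM1 : (1 : ℝ) ≤ (M : ℝ) := by exact_mod_cast one_le_misCount T CU CV n
    have hts1 : (1 : ℝ) ≤ tailStat T Φ Ψ n := one_le_tailStat T Φ Ψ n
    have hlog : Real.log (M : ℝ) ≤ Real.log (tailStat T Φ Ψ n) + (n : ℝ) * η := by
      have hpow : (0 : ℝ) < Real.exp (-η) ^ n := pow_pos (Real.exp_pos _) n
      have hl1 : Real.log ((M : ℝ) * Real.exp (-η) ^ n) ≤ Real.log (tailStat T Φ Ψ n) :=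
        Real.log_le_log (mul_pos (by linarith) hpow) hcore
      rw [Real.log_mul (by linarith) (ne_of_gt hpow), Real.log_pow, Real.log_exp] at hl1
      linarith
    calc Real.log ((M : ℝ)) / (n : ℝ)
        ≤ (Real.log (tailStat T Φ Ψ n) + (n : ℝ) * η) / (n : ℝ) :=
          (div_le_div_iff_of_pos_right hnpos).2 hlog
      _ = Real.log (tailStat T Φ Ψ n) / (n : ℝ) + η := by
          field_simp
  exact limsup_div_le_aux (misSeq_nonneg T CU CV) (tailSeq_nonneg T Φ Ψ)
    (misSeq_le T CU CV) (tailSeq_le T Φ Ψ) key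

end DirB
section FinalAux

/-- The trivial finite open cover. -/
def trivCover (X : Type*) [TopologicalSpace X] : FinOpenCover X :=
  ⟨1, fun _ => Set.univ, fun _ => isOpen_univ, by rw [Set.iUnion_const]⟩

lemma ereal_le_coe_of_forall {x : EReal} {r : ℝ}
    (h : ∀ η : ℝ, 0 < η → x ≤ ((r + η : ℝ) : EReal)) : x ≤ (r : EReal) := by
  induction x using EReal.rec with
  | bot => exact bot_le
  | coe a =>
    rw [EReal.coe_le_coe_iff]
    refine le_of_forall_pos_le_add fun η hη => ?_
    have := h η hη
    rwa [EReal.coe_le_coe_iff] at this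
  | top =>
    have := h 1 one_pos
    exact absurd this (not_le.2 (EReal.coe_lt_top _))

lemma triv_cont {X : Type*} [TopologicalSpace X] : (PartUnity.triv X).Cont :=
  fun _ => continuous_const

end FinalAux
/-- `h̃*(T) = h*(T)`: the topological tail entropy via continuous
partitions of unity equals Misiurewicz's topological tail entropy. -/
theorem tailEntPU_eq_misTail {X : Type*} [MetricSpace X] [CompactSpace X] [Nonempty X]
    [MeasurableSpace X] [BorelSpace X]
    (T : X → X) (hT : Continuous T) (hTsurj : Function.Surjective T) :
    tailEntPU T = misTail T := by
  refine le_antisymm ?_ ?_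
  · -- tailEntPU ≤ misTail
    refine le_iInf fun CV => ?_
    obtain ⟨Ψ, hΨ, hA⟩ := dirA T hT CV
    refine le_trans (iInf_le _ (⟨Ψ, hΨ⟩ : {Ψ : PartUnity X // Ψ.Cont})) ?_
    -- condTopEntPU T Ψ ≤ misCond T CV
    refine iSup_le fun Φ => ?_
    set Mer : EReal := misCond T CV with hMer
    have hbase : ((misCondLoc T (trivCover X) CV : ℝ) : EReal) ≤ Mer :=
      le_iSup (fun CU : FinOpenCover X => ((misCondLoc T CU CV : ℝ) : EReal)) (trivCover X)
    have hbot : Mer ≠ ⊥ := fun hbot => by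
      rw [hbot, le_bot_iff] at hbase
      exact (EReal.coe_ne_bot _) hbase
    by_cases htop : Mer = ⊤
    · rw [htop]; exact le_top
    · have hMeq : ((Mer.toReal : ℝ) : EReal) = Mer := EReal.coe_toReal htop hbot
      have hreal : tailLoc T Φ.1 Ψ ≤ Mer.toReal := by
        refine le_of_forall_pos_le_add fun η hη => ?_
        obtain ⟨CU, hCU⟩ := hA Φ.1 Φ.2 η hη
        refine hCU.trans (add_le_add_left ?_ η)
        have h1 : ((misCondLoc T CU CV : ℝ) : EReal) ≤ Mer :=
          le_iSup (fun CU' : FinOpenCover X => ((misCondLoc T CU' CV : ℝ) : EReal)) CU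
        rw [← hMeq, EReal.coe_le_coe_iff] at h1
        exact h1
      calc ((tailLoc T Φ.1 Ψ : ℝ) : EReal) ≤ ((Mer.toReal : ℝ) : EReal) :=
            EReal.coe_le_coe_iff.2 hreal
        _ = Mer := hMeq
  · -- misTail ≤ tailEntPU
    refine le_iInf fun Ψp => ?_
    obtain ⟨Ψ, hΨ⟩ := Ψp
    set K : EReal := condTopEntPU T Ψ with hK
    have hbase : ((tailLoc T (PartUnity.triv X) Ψ : ℝ) : EReal) ≤ K :=
      le_iSup (fun Φ : {Φ : PartUnity X // Φ.Cont} => ((tailLoc T Φ.1 Ψ : ℝ) : EReal))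
        (⟨PartUnity.triv X, triv_cont⟩ : {Φ : PartUnity X // Φ.Cont})
    have hbot : K ≠ ⊥ := fun hbot => by
      rw [hbot, le_bot_iff] at hbase
      exact (EReal.coe_ne_bot _) hbase
    by_cases htop : K = ⊤
    · show misTail T ≤ K
      rw [htop]; exact le_top
    · have hKeq : ((K.toReal : ℝ) : EReal) = K := EReal.coe_toReal htop hbot
      show misTail T ≤ K
      rw [← hKeq]
      refine ereal_le_coe_of_forall fun η hη => ?_
      obtain ⟨CV, hCV⟩ := dirB T hT Ψ hΨ η hη
      refine le_trans (iInf_le _ CV) ?_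
      refine iSup_le fun CU => ?_
      obtain ⟨Φ, hΦ, hle⟩ := hCV CU
      have htail : tailLoc T Φ Ψ ≤ K.toReal := by
        have h1 : ((tailLoc T Φ Ψ : ℝ) : EReal) ≤ K :=
          le_iSup (fun Φ' : {Φ' : PartUnity X // Φ'.Cont} => ((tailLoc T Φ'.1 Ψ : ℝ) : EReal))
            (⟨Φ, hΦ⟩ : {Φ' : PartUnity X // Φ'.Cont})
        rw [← hKeq, EReal.coe_le_coe_iff] at h1
        exact h1
      exact EReal.coe_le_coe_iff.2 (hle.trans (add_le_add_left htail η))
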